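/- arXiv:2506.10222 — 10 statements merged into one kernel-verified Lean document; each statement's English description precedes it below -/
import Mathlib

section
/- Suppose S' is a child of S in the ordinarization tree T_g. Then (1) every effective generator of S' is an effective generator of S, i.e. eg(S') ⊆ eg(S); (2) the Frobenius number F(S') is an element of eg(S) \ eg(S'). Consequently h(S) > h(S'). -/
/-- A numerical semigroup: a subset of ℕ containing 0, closed under addition,
with finite complement. -/
def IsNumericalSemigroup (S : Set ℕ) : Prop :=
  0 ∈ S ∧ (∀ a ∈ S, ∀ b ∈ S, a + b ∈ S) ∧ Sᶜ.Finite

/-- The genus: the number of gaps. -/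
noncomputable def genus (S : Set ℕ) : ℕ := Sᶜ.ncard

/-- The Frobenius number: the largest gap. -/
noncomputable def frob (S : Set ℕ) : ℕ := sSup Sᶜ

/-- The multiplicity: the smallest nonzero element. -/
noncomputable def mult (S : Set ℕ) : ℕ := sInf (S \ {0})

/-- The ordinary numerical semigroup of genus `g`: `{0, g+1, g+2, ...}`. -/
def ordinary (g : ℕ) : Set ℕ := {0} ∪ {n | g + 1 ≤ n}

/-- The ordinarization transform `S ∪ {F(S)} \ {m(S)}`. -/
noncomputable def transform (S : Set ℕ) : Set ℕ := (S ∪ {frob S}) \ {mult S}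

/-- A minimal generator: a nonzero element of `S` that is not a sum of two
nonzero elements of `S`. -/
def IsMinGen (S : Set ℕ) (m : ℕ) : Prop :=
  m ∈ S ∧ m ≠ 0 ∧ ¬ ∃ u ∈ S, ∃ v ∈ S, u ≠ 0 ∧ v ≠ 0 ∧ u + v = m

/-- The set of effective generators: minimal generators larger than the
Frobenius number. -/
noncomputable def eg (S : Set ℕ) : Set ℕ := {m | IsMinGen S m ∧ frob S < m}

/-- The number of effective generators. -/
noncomputable def hEff (S : Set ℕ) : ℕ := (eg S).ncard

/-- `S'` is a child of `S` in the ordinarization tree: `S'` is a numerical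
semigroup, not the ordinary semigroup of its genus, and its ordinarization
transform is `S`. -/
def IsChild (S' S : Set ℕ) : Prop :=
  IsNumericalSemigroup S' ∧ S' ≠ ordinary (genus S') ∧ transform S' = S

lemma mem_of_frob_lt {S : Set ℕ} (h : Sᶜ.Finite) {n : ℕ} (hn : frob S < n) : n ∈ S := by
  by_contra hc
  exact absurd (le_csSup h.bddAbove hc) (not_le.mpr hn)

theorem stmt_0 (g : ℕ) (S S' : Set ℕ)
    (hS : IsNumericalSemigroup S) (hgS : genus S = g) (hgS' : genus S' = g)
    (hchild : IsChild S' S) :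
    eg S' ⊆ eg S ∧ frob S' ∈ eg S \ eg S' ∧ hEff S' < hEff S := by
  obtain ⟨hS0, hSadd, hScof⟩ := hS
  obtain ⟨⟨h0', hadd', hcof'⟩, hne, htr⟩ := hchild
  -- multiplicity facts
  have hne0 : (S' \ {0}).Nonempty :=
    ((Set.infinite_of_finite_compl hcof').diff (Set.finite_singleton 0)).nonempty
  have hm'mem : mult S' ∈ S' ∧ mult S' ≠ 0 := Nat.sInf_mem hne0
  have hmin : ∀ n ∈ S', n ≠ 0 → mult S' ≤ n := fun n hn hn0 => Nat.sInf_le ⟨hn, hn0⟩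
  -- complement nonempty
  have hcne : S'ᶜ.Nonempty := by
    by_contra hc
    rw [Set.not_nonempty_iff_eq_empty] at hc
    have hU : S' = Set.univ := Set.compl_empty_iff.mp hc
    apply hne
    have hg0 : genus S' = 0 := by simp [genus, hc]
    rw [hg0, hU]
    ext n
    simp [ordinary]
    omega
  have hF'mem : frob S' ∈ S'ᶜ := Nat.sSup_mem hcne hcof'.bddAbove
  have hgtF' : ∀ n, frob S' < n → n ∈ S' := fun _ hn => mem_of_frob_lt hcof' hn
  -- mult S' < frob S'
  have hmF : mult S' < frob S' := by
    rcases lt_trichotomy (mult S') (frob S') with h | h | h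
    · exact h
    · exact absurd (h ▸ hm'mem.1) hF'mem
    · exfalso
      apply hne
      have hSeq : ∀ n, n ∈ S' ↔ (n = 0 ∨ mult S' ≤ n) := by
        intro n
        constructor
        · intro hn
          rcases eq_or_ne n 0 with h0 | h0
          · exact Or.inl h0
          · exact Or.inr (hmin n hn h0)
        · rintro (h0 | hle)
          · exact h0 ▸ h0'
          · exact hgtF' n (lt_of_lt_of_le h hle)
      have hcompl : S'ᶜ = Set.Ioo 0 (mult S') := by
        ext n
        simp only [Set.mem_compl_iff, hSeq n, Set.mem_Ioo]
        omega
      have hgen : genus S' = mult S' - 1 := by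
        rw [genus, hcompl, ← Finset.coe_Ioo, Set.ncard_coe_finset, Nat.card_Ioo]
        omega
      have h1 : 1 ≤ mult S' := Nat.one_le_iff_ne_zero.mpr hm'mem.2
      rw [hgen]
      ext n
      simp only [hSeq n, ordinary, Set.mem_union, Set.mem_singleton_iff, Set.mem_setOf_eq]
      omega
  -- membership in S
  have hmemS : ∀ n, n ∈ S ↔ (n ∈ S' ∨ n = frob S') ∧ n ≠ mult S' := by
    intro n
    rw [← htr]
    simp only [transform, Set.mem_diff, Set.mem_union, Set.mem_singleton_iff]
  -- frob S < frob S'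
  have hFS : frob S < frob S' := by
    have hbound : ∀ n ∈ Sᶜ, n < frob S' := by
      intro n hn
      rw [Set.mem_compl_iff, hmemS] at hn
      rcases eq_or_ne n (mult S') with h | h
      · exact h ▸ hmF
      · have hA : ¬(n ∈ S' ∨ n = frob S') := fun ha => hn ⟨ha, h⟩
        push_neg at hA
        have hle : n ≤ frob S' := le_csSup hcof'.bddAbove hA.1
        exact lt_of_le_of_ne hle hA.2
    rcases Set.eq_empty_or_nonempty Sᶜ with h | h
    · have h0 : frob S = 0 := by rw [frob, h]; exact csSup_empty
      omega
    · exact hbound _ (Nat.sSup_mem h hScof.bddAbove)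
  -- nonzero elements of S exceed mult S'
  have hgtm : ∀ u ∈ S, u ≠ 0 → mult S' < u := by
    intro u hu hu0
    rw [hmemS] at hu
    rcases hu.1 with h | h
    · exact lt_of_le_of_ne (hmin u h hu0) (Ne.symm hu.2)
    · exact h ▸ hmF
  -- part 1
  have hsub : eg S' ⊆ eg S := by
    rintro x ⟨⟨hxS', hx0, hxmin⟩, hxF⟩
    refine ⟨⟨?_, hx0, ?_⟩, lt_trans hFS hxF⟩
    · rw [hmemS]
      exact ⟨Or.inl hxS', by omega⟩
    · rintro ⟨u, hu, v, hv, hu0, hv0, huv⟩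
      have hum := hgtm u hu hu0
      have hvm := hgtm v hv hv0
      rw [hmemS] at hu hv
      rcases hu.1 with huS | huF
      · rcases hv.1 with hvS | hvF
        · exact hxmin ⟨u, huS, v, hvS, hu0, hv0, huv⟩
        · exact hxmin ⟨mult S', hm'mem.1, u + frob S' - mult S',
            hgtF' _ (by omega), hm'mem.2, by omega, by omega⟩
      · exact hxmin ⟨mult S', hm'mem.1, v + frob S' - mult S',
          hgtF' _ (by omega), hm'mem.2, by omega, by omega⟩
  -- part 2
  have hF'eg : frob S' ∈ eg S := by
    refine ⟨⟨?_, by omega, ?_⟩, hFS⟩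
    · rw [hmemS]; exact ⟨Or.inr rfl, by omega⟩
    · rintro ⟨u, hu, v, hv, hu0, hv0, huv⟩
      have hum := hgtm u hu hu0
      have hvm := hgtm v hv hv0
      rw [hmemS] at hu hv
      have huS : u ∈ S' := by
        rcases hu.1 with h | h
        · exact h
        · exfalso; omega
      have hvS : v ∈ S' := by
        rcases hv.1 with h | h
        · exact h
        · exfalso; omega
      exact hF'mem (huv ▸ hadd' u huS v hvS)
  have hF'not : frob S' ∉ eg S' := fun h => hF'mem h.1.1
  refine ⟨hsub, ⟨hF'eg, hF'not⟩, ?_⟩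
  -- part 3
  have hfin : (eg S).Finite := by
    apply (Set.finite_Iic (2 * frob S + 1)).subset
    rintro x ⟨⟨hxS, hx0, hxmin⟩, hxF⟩
    by_contra hc
    simp only [Set.mem_Iic, not_le] at hc
    exact hxmin ⟨frob S + 1, mem_of_frob_lt hScof (by omega), x - frob S - 1,
      mem_of_frob_lt hScof (by omega), by omega, by omega, by omega⟩
  exact Set.ncard_lt_ncard ⟨hsub, fun h => hF'not (h hF'eg)⟩ hfin
end

section
/- Suppose S' is a child of S in the ordinarization tree T_g, and write S' = S \ {a} ∪ {b} with a ∈ S and b ∈ ℕ \ S. Then a is an effective generator of S, and ⌈m(S)/2⌉ ≤ b ≤ m(S) − 1. -/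
theorem stmt_2 (g : ℕ) (S S' : Set ℕ) (a b : ℕ)
    (hS : IsNumericalSemigroup S) (hgS : genus S = g) (hgS' : genus S' = g)
    (hchild : IsChild S' S)
    (ha : a ∈ S) (hb : b ∉ S) (hS'eq : S' = (S \ {a}) ∪ {b}) :
    a ∈ eg S ∧ (mult S + 1) / 2 ≤ b ∧ b ≤ mult S - 1 := by
  obtain ⟨h0, hadd, hfin⟩ := hS
  obtain ⟨⟨h0', hadd', hfin'⟩, hnotord, htr⟩ := hchild
  have hab : a ≠ b := fun h => hb (h ▸ ha)
  have haS' : a ∉ S' := by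
    rw [hS'eq]
    rintro (⟨-, h⟩ | h)
    · exact h rfl
    · exact hab h
  have hbS' : b ∈ S' := by rw [hS'eq]; right; rfl
  have hSsub : S \ {a} ⊆ S' := by rw [hS'eq]; exact Set.subset_union_left
  have hb0 : b ≠ 0 := fun h => hb (h ▸ h0)
  have hfa : frob S' = a := by
    have ha' : a ∈ transform S' := by rw [htr]; exact ha
    obtain ⟨h1, -⟩ := ha'
    rcases h1 with h1 | h1
    · exact absurd h1 haS'
    · exact h1.symm
  have hmb : mult S' = b := by
    by_contra h
    apply hb
    rw [← htr]
    exact ⟨Or.inl hbS', fun hh => h hh.symm⟩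
  have hbdd' : BddAbove S'ᶜ := hfin'.bddAbove
  have hgapsle : ∀ n, n ∉ S' → n ≤ a := fun n hn => hfa ▸ le_csSup hbdd' hn
  -- b < a
  have hba : b < a := by
    rcases lt_or_ge b a with h | h
    · exact h
    · exfalso
      have hab' : a < b := lt_of_le_of_ne h hab
      have hcompl : S'ᶜ = Set.Icc 1 a := by
        ext n
        simp only [Set.mem_compl_iff, Set.mem_Icc]
        constructor
        · intro hn
          refine ⟨?_, hgapsle n hn⟩
          rcases Nat.eq_zero_or_pos n with h0n | h0n
          · exact absurd (h0n ▸ h0') hn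
          · exact h0n
        · rintro ⟨h1n, h2n⟩ hnS'
          have : mult S' ≤ n := Nat.sInf_le ⟨hnS', by simp; omega⟩
          omega
      apply hnotord
      have hgen : genus S' = a := by
        rw [genus, hcompl, ← Finset.coe_Icc, Set.ncard_coe_finset, Nat.card_Icc]; omega
      ext n
      rw [hgen]
      simp only [ordinary, Set.mem_union, Set.mem_singleton_iff, Set.mem_setOf_eq]
      constructor
      · intro hn
        by_cases hn0 : n = 0
        · exact Or.inl hn0
        · right
          by_contra hlt
          push_neg at hlt
          have : n ∈ S'ᶜ := by rw [hcompl]; exact ⟨by omega, by omega⟩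
          exact this hn
      · rintro (rfl | hn)
        · exact h0'
        · by_contra hnS'
          have := hgapsle n hnS'
          omega
  -- every gap of S is < a
  have hgapS : ∀ n, n ∉ S → n < a := by
    intro n hn
    rw [← htr] at hn
    simp only [transform, hfa, hmb, Set.mem_diff, Set.mem_union,
      Set.mem_singleton_iff] at hn
    push_neg at hn
    by_cases hnS' : n ∈ S'
    · have := hn (Or.inl hnS')
      omega
    · have hle := hgapsle n hnS'
      by_cases hna : n = a
      · have := hn (Or.inr hna)
        omega
      · omega
  have hfrobS : frob S < a := by
    have hne : Sᶜ.Nonempty := ⟨b, hb⟩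
    have := Nat.sSup_mem hne hfin.bddAbove
    exact hgapS _ this
  have hegA : a ∈ eg S := by
    refine ⟨⟨ha, by omega, ?_⟩, hfrobS⟩
    rintro ⟨u, hu, v, hv, hu0, hv0, huv⟩
    have hua : u ≠ a := by omega
    have hva : v ≠ a := by omega
    have huS' : u ∈ S' := hSsub ⟨hu, hua⟩
    have hvS' : v ∈ S' := hSsub ⟨hv, hva⟩
    exact haS' (huv ▸ hadd' u huS' v hvS')
  have hmultS_mem : mult S ∈ S \ {0} := Nat.sInf_mem ⟨a, ha, by simp; omega⟩
  have h2b : b + b ∈ S := by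
    have hbb : b + b ∈ S' := hadd' b hbS' b hbS'
    by_contra h2bS
    rw [← htr] at h2bS
    simp only [transform, hfa, hmb, Set.mem_diff, Set.mem_union,
      Set.mem_singleton_iff] at h2bS
    push_neg at h2bS
    have := h2bS (Or.inl hbb)
    omega
  have hm2b : mult S ≤ b + b := Nat.sInf_le ⟨h2b, by simp; omega⟩
  have hbm : b < mult S := by
    by_cases hma : mult S = a
    · omega
    · have hmS' : mult S ∈ S' := hSsub ⟨hmultS_mem.1, hma⟩
      have hle : mult S' ≤ mult S := Nat.sInf_le ⟨hmS', hmultS_mem.2⟩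
      have hne : b ≠ mult S := fun h => hb (h ▸ hmultS_mem.1)
      omega
  exact ⟨hegA, by omega, by omega⟩
end

section
/- Let S be a numerical semigroup of genus g. The number of children of S in the ordinarization tree T_g that have no effective generators (i.e. children S' with h(S') = 0) is at most ⌊m(S)/2⌋. -/
namespace Stmt3Aux

/-- Structural facts about a child. -/
lemma child_facts {S S' : Set ℕ} (hS : IsNumericalSemigroup S) (hC : IsChild S' S) :
    mult S' ∈ S' ∧ mult S' ≠ 0 ∧ mult S' ∉ S ∧
    frob S' ∈ S ∧ frob S' ∉ S' ∧ mult S' < frob S' ∧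
    S' = (S ∪ {mult S'}) \ {frob S'} ∧
    mult S ≤ 2 * mult S' ∧ mult S' < mult S := by
  obtain ⟨h0', hcl', hfin'⟩ := hC.1
  have hT : (S' ∪ {frob S'}) \ {mult S'} = S := hC.2.2
  -- S' is infinite
  have hinf : S'.Infinite := by
    have := hfin'.infinite_compl
    rwa [compl_compl] at this
  have hm'ne : (S' \ {0}).Nonempty := (hinf.diff (Set.finite_singleton 0)).nonempty
  have hm'spec : mult S' ∈ S' \ {0} := Nat.sInf_mem hm'ne
  have hm'mem : mult S' ∈ S' := hm'spec.1
  have hm'0 : mult S' ≠ 0 := hm'spec.2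
  have hm'low : ∀ n ∈ S', n ≠ 0 → mult S' ≤ n := fun n hn h0 => Nat.sInf_le ⟨hn, h0⟩
  -- complement nonempty (else S' ordinary of genus 0)
  have hne : S'ᶜ.Nonempty := by
    by_contra h
    rw [Set.not_nonempty_iff_eq_empty] at h
    have huniv : S' = Set.univ := by
      rw [← compl_compl S', h, Set.compl_empty]
    apply hC.2.1
    have hg : genus S' = 0 := by simp [genus, h]
    rw [hg, huniv]
    ext n
    simp [ordinary]
    omega
  have hF'gap : frob S' ∈ S'ᶜ := Nat.sSup_mem hne hfin'.bddAbove
  have hF'not : frob S' ∉ S' := hF'gap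
  have hall : ∀ n, frob S' < n → n ∈ S' := by
    intro n hn
    by_contra hns
    have : n ≤ frob S' := le_csSup hfin'.bddAbove hns
    omega
  have hm'notS : mult S' ∉ S := by
    rw [← hT]
    intro h
    exact h.2 rfl
  have hFne : frob S' ≠ mult S' := fun h => hF'not (h ▸ hm'mem)
  have hF'S : frob S' ∈ S := by
    rw [← hT]
    exact ⟨Or.inr rfl, by simpa using hFne⟩
  -- mult S' < frob S'
  have hm'F : mult S' < frob S' := by
    rcases lt_trichotomy (mult S') (frob S') with h | h | h
    · exact h
    · exact absurd h.symm hFne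
    · -- all gaps < mult S', so S' is ordinary: contradiction
      exfalso
      set m' := mult S' with hm'def
      have hSeq : S' = {0} ∪ {n | m' ≤ n} := by
        ext n
        simp only [Set.mem_union, Set.mem_singleton_iff, Set.mem_setOf_eq]
        constructor
        · intro hn
          by_cases hn0 : n = 0
          · exact Or.inl hn0
          · exact Or.inr (hm'low n hn hn0)
        · rintro (rfl | hn)
          · exact h0'
          · exact hall n (by omega)
      apply hC.2.1
      have hg : genus S' = m' - 1 := by
        have hc : S'ᶜ = Set.Ico 1 m' := by
          rw [hSeq]
          ext n
          simp only [Set.mem_compl_iff, Set.mem_union, Set.mem_singleton_iff,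
            Set.mem_setOf_eq, Set.mem_Ico]
          omega
        rw [genus, hc, ← Finset.coe_Ico, Set.ncard_coe_finset, Nat.card_Ico]
      rw [hg, hSeq, ordinary]
      ext n
      simp only [Set.mem_union, Set.mem_singleton_iff, Set.mem_setOf_eq]
      have := hm'0
      omega
  -- S' in terms of S
  have hS'eq : S' = (S ∪ {mult S'}) \ {frob S'} := by
    ext n
    simp only [← hT, Set.mem_diff, Set.mem_union, Set.mem_singleton_iff]
    constructor
    · intro hn
      refine ⟨?_, fun h => hF'not (h ▸ hn)⟩
      by_cases hnm : n = mult S'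
      · exact Or.inr hnm
      · exact Or.inl ⟨Or.inl hn, hnm⟩
    · rintro ⟨⟨hn | hF, hnm⟩ | rfl, hnF⟩
      · exact hn
      · exact absurd hF hnF
      · exact hm'mem
  -- mult S ≤ 2 * mult S'
  have h2m' : 2 * mult S' ∈ S := by
    have hs : mult S' + mult S' ∈ S' := hcl' _ hm'mem _ hm'mem
    rw [← hT]
    refine ⟨Or.inl (by rwa [two_mul]), ?_⟩
    simp only [Set.mem_singleton_iff]
    omega
  have hSinf : S.Infinite := by
    have := hS.2.2.infinite_compl
    rwa [compl_compl] at this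
  have hmSne : (S \ {0}).Nonempty := (hSinf.diff (Set.finite_singleton 0)).nonempty
  have hmSspec : mult S ∈ S \ {0} := Nat.sInf_mem hmSne
  have hle : mult S ≤ 2 * mult S' := Nat.sInf_le ⟨h2m', by simpa using by omega⟩
  -- mult S' < mult S
  have hm'ltm : mult S' < mult S := by
    have hmem : mult S ∈ (S' ∪ {frob S'}) \ {mult S'} := by rw [hT]; exact hmSspec.1
    rcases hmem.1 with h | h
    · have h1 : mult S' ≤ mult S :=
        hm'low _ h (by have := hmSspec.2; simpa using this)
      have h2 : mult S' ≠ mult S := fun h' => hm'notS (h' ▸ hmSspec.1)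
      omega
    · simp only [Set.mem_singleton_iff] at h
      omega
  exact ⟨hm'mem, hm'0, hm'notS, hF'S, hF'not, hm'F, hS'eq, hle, hm'ltm⟩

/-- If a child has no effective generators, `eg` is empty. -/
lemma eg_empty {S S' : Set ℕ} (hS : IsNumericalSemigroup S) (hC : IsChild S' S)
    (h0 : hEff S' = 0) : eg S' = ∅ := by
  obtain ⟨_, hm'0, _, _, _, _, _, _, _⟩ := child_facts hS hC
  obtain ⟨h0', hcl', hfin'⟩ := hC.1
  have hall : ∀ n, frob S' < n → n ∈ S' := by
    intro n hn
    by_contra hns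
    have : n ≤ frob S' := le_csSup hfin'.bddAbove hns
    omega
  have hm'mem : mult S' ∈ S' := by
    obtain ⟨h, _, _, _, _, _, _, _, _⟩ := child_facts hS hC
    exact h
  have hsub : eg S' ⊆ Set.Ioc (frob S') (frob S' + mult S') := by
    intro x hx
    obtain ⟨⟨hxS, hx0, hns⟩, hxF⟩ := hx
    refine ⟨hxF, ?_⟩
    by_contra hgt
    push_neg at hgt
    have hv : x - mult S' ∈ S' := hall _ (by omega)
    exact hns ⟨mult S', hm'mem, x - mult S', hv, hm'0, by omega, by omega⟩
  have hfin : (eg S').Finite := Set.Finite.subset (Set.finite_Ioc _ _) hsub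
  rwa [hEff, Set.ncard_eq_zero hfin] at h0

/-- No two distinct children with no effective generators share a multiplicity. -/
lemma no_two {S S1 S2 : Set ℕ} (hS : IsNumericalSemigroup S)
    (hC1 : IsChild S1 S) (h01 : hEff S1 = 0)
    (hC2 : IsChild S2 S) (h02 : hEff S2 = 0)
    (hm : mult S1 = mult S2) (hlt : frob S1 < frob S2) : False := by
  obtain ⟨_, _, _, _, _, _, heq1, _, _⟩ := child_facts hS hC1
  obtain ⟨_, hm2'0, _, hF2S, hF2not, hm2F, heq2, _, _⟩ := child_facts hS hC2
  have hF2mem : frob S2 ∈ S1 := by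
    rw [heq1]
    exact ⟨Or.inl hF2S, by simp; omega⟩
  have hnotgen : ¬ IsMinGen S1 (frob S2) := by
    intro hgen
    have : frob S2 ∈ eg S1 := ⟨hgen, hlt⟩
    rw [eg_empty hS hC1 h01] at this
    exact this
  have hF20 : frob S2 ≠ 0 := by omega
  simp only [IsMinGen, not_and, not_not] at hnotgen
  obtain ⟨u, hu, v, hv, hu0, hv0, huv⟩ := hnotgen hF2mem hF20
  -- u, v ∈ S2 since they are in S ∪ {mult S1} and are < frob S2
  have huS2 : u ∈ S2 := by
    rw [heq1] at hu
    rw [heq2, ← hm]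
    exact ⟨hu.1, by simp; omega⟩
  have hvS2 : v ∈ S2 := by
    rw [heq1] at hv
    rw [heq2, ← hm]
    exact ⟨hv.1, by simp; omega⟩
  have : u + v ∈ S2 := hC2.1.2.1 _ huS2 _ hvS2
  rw [huv] at this
  exact hF2not this

end Stmt3Aux

theorem stmt_3 (g : ℕ) (S : Set ℕ)
    (hS : IsNumericalSemigroup S) (hgS : genus S = g) :
    {S' : Set ℕ | IsChild S' S ∧ hEff S' = 0}.ncard ≤ mult S / 2 := by
  set m := mult S with hm
  have hmaps : ∀ S' ∈ {S' : Set ℕ | IsChild S' S ∧ hEff S' = 0},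
      mult S' ∈ Set.Ico ((m + 1) / 2) m := by
    rintro S' ⟨hC, _⟩
    obtain ⟨_, _, _, _, _, _, _, hle, hlt⟩ := Stmt3Aux.child_facts hS hC
    simp only [Set.mem_Ico]
    omega
  have hinj : Set.InjOn mult {S' : Set ℕ | IsChild S' S ∧ hEff S' = 0} := by
    rintro S1 ⟨hC1, h01⟩ S2 ⟨hC2, h02⟩ hmm
    obtain ⟨_, _, _, _, _, _, heq1, _, _⟩ := Stmt3Aux.child_facts hS hC1
    obtain ⟨_, _, _, _, _, _, heq2, _, _⟩ := Stmt3Aux.child_facts hS hC2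
    rcases lt_trichotomy (frob S1) (frob S2) with h | h | h
    · exact absurd (Stmt3Aux.no_two hS hC1 h01 hC2 h02 hmm h) (fun x => x)
    · rw [heq1, heq2, hmm, h]
    · exact absurd (Stmt3Aux.no_two hS hC2 h02 hC1 h01 hmm.symm h) (fun x => x)
  have hcard := Set.ncard_le_ncard_of_injOn mult hmaps hinj
    (Set.finite_Ico ((m + 1) / 2) m)
  have hico : (Set.Ico ((m + 1) / 2) m).ncard = m - (m + 1) / 2 := by
    rw [← Finset.coe_Ico, Set.ncard_coe_finset, Nat.card_Ico]
  rw [hico] at hcard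
  omega
end

section
/- There exist infinitely many numerical semigroups S such that h(S) = 4 and S has at least one child in the ordinarization tree T_{g(S)}. -/
/-! ### The family -/

def famA (t : ℕ) : Set ℕ := {n | n = 0 ∨ (3 ∣ n ∧ 6 ≤ n ∧ n ≤ 3 * t) ∨ 3 * t + 2 ≤ n}

def famB (t : ℕ) : Set ℕ := {n | 3 ∣ n ∨ 3 * t + 3 ≤ n}

lemma memA (t n : ℕ) : n ∈ famA t ↔ n = 0 ∨ (3 ∣ n ∧ 6 ≤ n ∧ n ≤ 3 * t) ∨ 3 * t + 2 ≤ n :=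
  Iff.rfl

lemma memB (t n : ℕ) : n ∈ famB t ↔ 3 ∣ n ∨ 3 * t + 3 ≤ n := Iff.rfl

lemma nsA (t : ℕ) (ht : 3 ≤ t) : IsNumericalSemigroup (famA t) := by
  refine ⟨Or.inl rfl, ?_, ?_⟩
  · intro a ha b hb
    rw [memA] at *
    omega
  · apply Set.Finite.subset (Set.finite_Iio (3 * t + 2))
    intro n hn
    simp only [Set.mem_compl_iff, memA] at hn
    simp only [Set.mem_Iio]
    omega

lemma nsB (t : ℕ) : IsNumericalSemigroup (famB t) := by
  refine ⟨Or.inl ⟨0, rfl⟩, ?_, ?_⟩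
  · intro a ha b hb
    rw [memB] at *
    omega
  · apply Set.Finite.subset (Set.finite_Iio (3 * t + 3))
    intro n hn
    simp only [Set.mem_compl_iff, memB] at hn
    simp only [Set.mem_Iio]
    omega

lemma frobA (t : ℕ) (ht : 3 ≤ t) : frob (famA t) = 3 * t + 1 := by
  have hmem : (3 * t + 1) ∈ (famA t)ᶜ := by
    simp only [Set.mem_compl_iff, memA]; omega
  apply le_antisymm
  · apply csSup_le ⟨3 * t + 1, hmem⟩
    intro x hx
    simp only [Set.mem_compl_iff, memA] at hx
    omega
  · exact le_csSup ⟨3 * t + 1, by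
      intro x hx
      simp only [Set.mem_compl_iff, memA] at hx
      omega⟩ hmem

lemma frobB (t : ℕ) : frob (famB t) = 3 * t + 2 := by
  have hmem : (3 * t + 2) ∈ (famB t)ᶜ := by
    simp only [Set.mem_compl_iff, memB]; omega
  apply le_antisymm
  · apply csSup_le ⟨3 * t + 2, hmem⟩
    intro x hx
    simp only [Set.mem_compl_iff, memB] at hx
    omega
  · exact le_csSup ⟨3 * t + 2, by
      intro x hx
      simp only [Set.mem_compl_iff, memB] at hx
      omega⟩ hmem

lemma multB (t : ℕ) : mult (famB t) = 3 := by
  have hmem : (3 : ℕ) ∈ famB t \ {0} := by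
    simp only [Set.mem_diff, memB, Set.mem_singleton_iff]; omega
  apply le_antisymm
  · exact Nat.sInf_le hmem
  · apply le_csInf ⟨3, hmem⟩
    intro x hx
    simp only [Set.mem_diff, memB, Set.mem_singleton_iff] at hx
    omega

lemma minGenA (t m : ℕ) (ht : 3 ≤ t) (h1 : 3 * t + 2 ≤ m) (h2 : m ≤ 3 * t + 7)
    (h3 : ¬ 3 ∣ m) : IsMinGen (famA t) m := by
  refine ⟨by rw [memA]; omega, by omega, ?_⟩
  rintro ⟨u, hu, v, hv, hu0, hv0, huv⟩
  rw [memA] at hu hv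
  omega

lemma egA (t : ℕ) (ht : 3 ≤ t) :
    eg (famA t) = {3 * t + 2, 3 * t + 4, 3 * t + 5, 3 * t + 7} := by
  ext m
  simp only [eg, Set.mem_setOf_eq, frobA t ht, Set.mem_insert_iff, Set.mem_singleton_iff]
  constructor
  · rintro ⟨⟨hmS, hm0, hnot⟩, hlt⟩
    rw [memA] at hmS
    by_contra hc
    push_neg at hc
    apply hnot
    refine ⟨6, by rw [memA]; omega, m - 6, by rw [memA]; omega, by omega, by omega, by omega⟩
  · intro hm
    refine ⟨minGenA t m ht (by omega) (by omega) (by omega), by omega⟩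

lemma hEffA (t : ℕ) (ht : 3 ≤ t) : hEff (famA t) = 4 := by
  rw [hEff, egA t ht]
  rw [Set.ncard_insert_of_notMem (by simp only [Set.mem_insert_iff, Set.mem_singleton_iff]; omega) (Set.toFinite _),
      Set.ncard_insert_of_notMem (by simp only [Set.mem_insert_iff, Set.mem_singleton_iff]; omega) (Set.toFinite _),
      Set.ncard_pair (by omega)]

lemma transformB (t : ℕ) (ht : 3 ≤ t) : transform (famB t) = famA t := by
  rw [transform, frobB, multB]
  ext n
  simp only [Set.mem_diff, Set.mem_union, memB, Set.mem_singleton_iff, memA]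
  omega

lemma nonOrdB (t : ℕ) (ht : 1 ≤ t) : famB t ≠ ordinary (genus (famB t)) := by
  intro h
  set g := genus (famB t)
  have h3 : (3 : ℕ) ∈ famB t := by rw [memB]; omega
  have h4 : (4 : ℕ) ∉ famB t := by rw [memB]; omega
  rw [h] at h3 h4
  simp only [ordinary, Set.mem_union, Set.mem_singleton_iff, Set.mem_setOf_eq] at h3 h4
  omega

theorem stmt_4 :
    {S : Set ℕ | IsNumericalSemigroup S ∧ hEff S = 4 ∧
      ∃ S' : Set ℕ, IsChild S' S}.Infinite := by
  have key : ∀ x y : ℕ, famA (x + 3) = famA (y + 3) → x < y → False := by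
    intro x y hEq hxy
    have h1 : (3 * x + 11) ∈ famA (x + 3) := by rw [memA]; omega
    rw [hEq, memA] at h1
    omega
  apply Set.infinite_of_injective_forall_mem (f := fun k : ℕ => famA (k + 3))
  case hi =>
    intro a b h
    rcases Nat.lt_trichotomy a b with h' | h' | h'
    · exact absurd (key a b h h') (by simp)
    · exact h'
    · exact absurd (key b a h.symm h') (by simp)
  case hf =>
    intro k
    simp only [Set.mem_setOf_eq]
    exact ⟨nsA _ (by omega), hEffA _ (by omega),
      famB (k + 3), nsB _, nonOrdB _ (by omega), transformB _ (by omega)⟩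
end

section
/- For every nonnegative integer g, the number of numerical semigroups of genus g and ordinarization number 1 is n_{g,1} = (3/8)g² − (1/4)g if g is even, and n_{g,1} = (3/8)g² − 3/8 if g is odd. -/
/-- The ordinarization number: `r(S) = #(S ∩ {1, ..., g(S)})`. -/
noncomputable def ordNum (S : Set ℕ) : ℕ := (S ∩ Set.Icc 1 (genus S)).ncard

/-- `nGR g r` is the number of numerical semigroups of genus `g` with
ordinarization number `r`. -/
noncomputable def nGR (g r : ℕ) : ℕ :=
  {S : Set ℕ | IsNumericalSemigroup S ∧ genus S = g ∧ ordNum S = r}.ncard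


def Sxy (g x y : ℕ) : Set ℕ := {0, x} ∪ (Set.Ici (g+1) \ {y})

def Yx (g x : ℕ) : Finset ℕ := (Finset.Icc (g+1) (x+g)).erase (2*x)

def Idx (g : ℕ) : Finset (ℕ × ℕ) :=
  ((Finset.Icc 1 g).filter (fun x => g+1 ≤ 2*x)).biUnion
    (fun x => (Yx g x).image (fun y => (x, y)))

lemma mem_Sxy {g x y n : ℕ} : n ∈ Sxy g x y ↔ n = 0 ∨ n = x ∨ (g+1 ≤ n ∧ n ≠ y) := by
  simp [Sxy, Set.mem_Ici]; tauto

lemma mem_Idx {g : ℕ} {p : ℕ × ℕ} : p ∈ Idx g ↔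
    1 ≤ p.1 ∧ p.1 ≤ g ∧ g+1 ≤ 2*p.1 ∧ g+1 ≤ p.2 ∧ p.2 ≤ p.1 + g ∧ p.2 ≠ 2*p.1 := by
  obtain ⟨a, b⟩ := p
  simp [Idx, Yx, Finset.mem_biUnion, Finset.mem_filter, Finset.mem_Icc, Finset.mem_erase,
    Finset.mem_image, Prod.mk.injEq]
  omega

lemma compl_Sxy {g x y : ℕ} (hx1 : 1 ≤ x) (hxg : x ≤ g) (hy : g+1 ≤ y) :
    (Sxy g x y)ᶜ = ↑(insert y ((Finset.Icc 1 g).erase x)) := by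
  ext n
  simp only [Set.mem_compl_iff, mem_Sxy, Finset.coe_insert, Set.mem_insert_iff,
    Finset.coe_erase, Set.mem_diff, Finset.coe_Icc, Set.mem_Icc, Set.mem_singleton_iff]
  omega

lemma genus_Sxy {g x y : ℕ} (hx1 : 1 ≤ x) (hxg : x ≤ g) (hy : g+1 ≤ y) :
    genus (Sxy g x y) = g := by
  rw [genus, compl_Sxy hx1 hxg hy, Set.ncard_coe_finset]
  rw [Finset.card_insert_of_notMem (by simp [Finset.mem_erase, Finset.mem_Icc]; omega)]
  rw [Finset.card_erase_of_mem (by simp [Finset.mem_Icc]; omega)]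
  simp [Nat.card_Icc]; omega

lemma inter_Sxy {g x y : ℕ} (hx1 : 1 ≤ x) (hxg : x ≤ g) (hy : g+1 ≤ y) :
    Sxy g x y ∩ Set.Icc 1 g = {x} := by
  ext n
  simp only [Set.mem_inter_iff, mem_Sxy, Set.mem_Icc, Set.mem_singleton_iff]
  omega

lemma ordNum_Sxy {g x y : ℕ} (hx1 : 1 ≤ x) (hxg : x ≤ g) (hy : g+1 ≤ y) :
    ordNum (Sxy g x y) = 1 := by
  rw [ordNum, genus_Sxy hx1 hxg hy, inter_Sxy hx1 hxg hy, Set.ncard_singleton]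

lemma isNS_Sxy {g x y : ℕ} (hx1 : 1 ≤ x) (hxg : x ≤ g) (h2x : g+1 ≤ 2*x) (hy1 : g+1 ≤ y)
    (hy2 : y ≤ x + g) (hy3 : y ≠ 2*x) : IsNumericalSemigroup (Sxy g x y) := by
  refine ⟨by rw [mem_Sxy]; left; rfl, ?_, ?_⟩
  · intro a ha b hb
    rw [mem_Sxy] at ha hb ⊢
    omega
  · rw [compl_Sxy hx1 hxg hy1]; exact Finset.finite_toSet _

lemma main_eq (g : ℕ) :
    {S : Set ℕ | IsNumericalSemigroup S ∧ genus S = g ∧ ordNum S = 1}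
      = (fun p : ℕ × ℕ => Sxy g p.1 p.2) '' ↑(Idx g) := by
  ext S
  simp only [Set.mem_setOf_eq, Set.mem_image, Finset.mem_coe, Prod.exists]
  constructor
  · rintro ⟨⟨h0, hadd, hfin⟩, hg, hr⟩
    rw [ordNum, hg] at hr
    obtain ⟨x, hx⟩ := Set.ncard_eq_one.mp hr
    have hxmem : x ∈ S ∩ Set.Icc 1 g := by rw [hx]; rfl
    obtain ⟨hxS, hx1, hxg⟩ : x ∈ S ∧ 1 ≤ x ∧ x ≤ g := ⟨hxmem.1, hxmem.2.1, hxmem.2.2⟩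
    have hg1 : 1 ≤ g := le_trans hx1 hxg
    have hA : Sᶜ ∩ Set.Icc 1 g = ↑((Finset.Icc 1 g).erase x) := by
      ext n
      simp only [Set.mem_inter_iff, Set.mem_compl_iff, Set.mem_Icc, Finset.coe_erase,
        Set.mem_diff, Finset.coe_Icc, Set.mem_singleton_iff]
      constructor
      · rintro ⟨hnS, hn⟩
        exact ⟨hn, fun e => hnS (e ▸ hxS)⟩
      · rintro ⟨hn, hnx⟩
        refine ⟨fun hnS => hnx ?_, hn⟩
        have hmem : n ∈ S ∩ Set.Icc 1 g := ⟨hnS, hn⟩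
        rw [hx] at hmem; exact hmem
    have hsplit : Sᶜ = (Sᶜ ∩ Set.Icc 1 g) ∪ (Sᶜ ∩ Set.Ici (g+1)) := by
      ext n
      simp only [Set.mem_union, Set.mem_inter_iff, Set.mem_compl_iff, Set.mem_Icc, Set.mem_Ici]
      constructor
      · intro hn
        have hn0 : n ≠ 0 := fun e => hn (e ▸ h0)
        rcases le_or_gt n g with h | h
        · exact Or.inl ⟨hn, by omega⟩
        · exact Or.inr ⟨hn, by omega⟩
      · tauto
    have hcard : (Sᶜ ∩ Set.Ici (g+1)).ncard = 1 := by
      have hfinA : (Sᶜ ∩ Set.Icc 1 g).Finite := hfin.inter_of_left _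
      have hfinB : (Sᶜ ∩ Set.Ici (g+1)).Finite := hfin.inter_of_left _
      have hdisj : Disjoint (Sᶜ ∩ Set.Icc 1 g) (Sᶜ ∩ Set.Ici (g+1)) := by
        rw [Set.disjoint_left]
        rintro n ⟨-, h1⟩ ⟨-, h2⟩
        simp only [Set.mem_Icc] at h1
        simp only [Set.mem_Ici] at h2
        omega
      have hu := Set.ncard_union_eq hdisj hfinA hfinB
      rw [← hsplit] at hu
      rw [genus] at hg
      rw [hg, hA, Set.ncard_coe_finset,
        Finset.card_erase_of_mem (by simp only [Finset.mem_Icc]; omega), Nat.card_Icc] at hu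
      omega
    obtain ⟨y, hy⟩ := Set.ncard_eq_one.mp hcard
    have hymem : y ∈ Sᶜ ∩ Set.Ici (g+1) := by rw [hy]; rfl
    have hyS : y ∉ S := hymem.1
    have hy1 : g+1 ≤ y := hymem.2
    have hSeq : S = Sxy g x y := by
      ext n
      rw [mem_Sxy]
      constructor
      · intro hnS
        by_cases hn0 : n = 0
        · exact Or.inl hn0
        by_cases hnx : n = x
        · exact Or.inr (Or.inl hnx)
        refine Or.inr (Or.inr ⟨?_, fun e => hyS (e ▸ hnS)⟩)
        by_contra hle
        push_neg at hle
        have hmem : n ∈ S ∩ Set.Icc 1 g := ⟨hnS, by constructor <;> omega⟩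
        rw [hx] at hmem
        exact hnx hmem
      · rintro (rfl | rfl | ⟨hn1, hn2⟩)
        · exact h0
        · exact hxS
        · by_contra hnS
          have hmem : n ∈ Sᶜ ∩ Set.Ici (g+1) := ⟨hnS, hn1⟩
          rw [hy] at hmem
          exact hn2 hmem
    have h2xS : x + x ∈ S := hadd x hxS x hxS
    have h2x : g + 1 ≤ 2*x := by
      by_contra hle
      push_neg at hle
      have hmem : x + x ∈ S ∩ Set.Icc 1 g := ⟨h2xS, by constructor <;> omega⟩
      rw [hx] at hmem
      have : x + x = x := hmem
      omega
    have hy3 : y ≠ 2*x := by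
      intro e
      apply hyS
      have h2 : 2*x = x + x := by ring
      rw [e, h2]; exact h2xS
    have hy2 : y ≤ x + g := by
      by_contra hlt
      push_neg at hlt
      have hyx : y - x ∈ S := by
        rw [hSeq, mem_Sxy]; right; right; omega
      have hsum := hadd x hxS (y - x) hyx
      have he : x + (y - x) = y := by omega
      rw [he] at hsum
      exact hyS hsum
    exact ⟨x, y, mem_Idx.mpr ⟨hx1, hxg, h2x, hy1, hy2, hy3⟩, hSeq.symm⟩
  · rintro ⟨x, y, hp, rfl⟩
    rw [mem_Idx] at hp
    obtain ⟨h1, h2, h3, h4, h5, h6⟩ := hp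
    exact ⟨isNS_Sxy h1 h2 h3 h4 h5 h6, genus_Sxy h1 h2 h4, ordNum_Sxy h1 h2 h4⟩

lemma inj_Sxy (g : ℕ) : Set.InjOn (fun p : ℕ × ℕ => Sxy g p.1 p.2) ↑(Idx g) := by
  rintro ⟨p1, p2⟩ hp ⟨q1, q2⟩ hq h
  simp only [Finset.mem_coe, mem_Idx] at hp hq
  simp only at h
  have hx : p1 = q1 := by
    have h1 : p1 ∈ Sxy g q1 q2 := by
      rw [← h, mem_Sxy]; right; left; rfl
    rw [mem_Sxy] at h1
    omega
  subst hx
  have hy : p2 = q2 := by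
    by_contra hne
    have h1 : p2 ∈ Sxy g p1 q2 := by
      rw [mem_Sxy]; right; right; exact ⟨by omega, hne⟩
    rw [← h, mem_Sxy] at h1
    omega
  subst hy; rfl

lemma nGR_eq_card (g : ℕ) : nGR g 1 = (Idx g).card := by
  rw [nGR, main_eq, Set.ncard_image_of_injOn (inj_Sxy g), Set.ncard_coe_finset]

lemma card_Idx (g : ℕ) :
    (Idx g).card = ∑ x ∈ (Finset.Icc 1 g).filter (fun x => g+1 ≤ 2*x), (x - 1) := by
  rw [Idx, Finset.card_biUnion]
  · apply Finset.sum_congr rfl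
    intro x hx
    simp only [Finset.mem_filter, Finset.mem_Icc] at hx
    rw [Finset.card_image_of_injective _ (fun a b hab => by simpa using hab)]
    rw [Yx, Finset.card_erase_of_mem (by simp only [Finset.mem_Icc]; omega), Nat.card_Icc]
    omega
  · intro a _ b _ hab
    simp only [Finset.disjoint_left, Finset.mem_image]
    rintro p ⟨y, _, rfl⟩ ⟨y', _, he⟩
    exact hab (by simpa using (Prod.mk.injEq _ _ _ _ ▸ he).1.symm)

theorem stmt_8 (g : ℕ) :
    (nGR g 1 : ℚ) =
      if Even g then 3/8 * (g : ℚ)^2 - 1/4 * (g : ℚ)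
      else 3/8 * (g : ℚ)^2 - 3/8 := by
  have key : (nGR g 1 : ℚ)
      = ((∑ x ∈ (Finset.Icc 1 g).filter (fun x => g+1 ≤ 2*x), (x - 1) : ℕ) : ℚ) := by
    rw [nGR_eq_card, card_Idx]
  rcases Nat.even_or_odd g with ⟨m, rfl⟩ | ⟨m, rfl⟩
  · rw [if_pos ⟨m, rfl⟩]
    have hfs : (Finset.Icc 1 (m+m)).filter (fun x => (m+m)+1 ≤ 2*x)
        = Finset.Icc (m+1) (m+m) := by
      ext a; simp only [Finset.mem_filter, Finset.mem_Icc]; omega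
    rw [hfs] at key
    have hT : (∑ x ∈ Finset.Icc (m+1) (m+m), (x - 1)) = ∑ i ∈ Finset.range m, (m + i) := by
      rw [← Finset.Ico_add_one_right_eq_Icc, Finset.sum_Ico_eq_sum_range]
      have h1 : m + m + 1 - (m + 1) = m := by omega
      rw [h1]
      exact Finset.sum_congr rfl fun i _ => by omega
    rw [hT] at key
    have hsum : (∑ i ∈ Finset.range m, (m + i)) * 2 + m = 3 * (m * m) := by
      rw [Finset.sum_add_distrib, Finset.sum_const, Finset.card_range, smul_eq_mul]
      have hs : (∑ i ∈ Finset.range m, i) * 2 + m = m * m := by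
        rcases m with _ | k
        · simp
        · rw [Finset.sum_range_id_mul_two]; simp only [Nat.succ_sub_one]; ring
      linarith [hs]
    rw [key]
    have hq : ((∑ i ∈ Finset.range m, (m + i) : ℕ) : ℚ) * 2 + m = 3 * (m * m) := by
      exact_mod_cast congrArg (Nat.cast : ℕ → ℚ) hsum
    push_cast
    push_cast at hq
    nlinarith [hq]
  · rw [if_neg (by simp only [Nat.even_iff]; omega)]
    have hfs : (Finset.Icc 1 (2*m+1)).filter (fun x => (2*m+1)+1 ≤ 2*x)
        = Finset.Icc (m+1) (2*m+1) := by
      ext a; simp only [Finset.mem_filter, Finset.mem_Icc]; omega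
    rw [hfs] at key
    have hT : (∑ x ∈ Finset.Icc (m+1) (2*m+1), (x - 1))
        = ∑ i ∈ Finset.range (m+1), (m + i) := by
      rw [← Finset.Ico_add_one_right_eq_Icc, Finset.sum_Ico_eq_sum_range]
      have h1 : 2*m + 1 + 1 - (m + 1) = m + 1 := by omega
      rw [h1]
      exact Finset.sum_congr rfl fun i _ => by omega
    rw [hT] at key
    have hsum : (∑ i ∈ Finset.range (m+1), (m + i)) * 2 = 3 * (m * m) + 3 * m := by
      rw [Finset.sum_add_distrib, Finset.sum_const, Finset.card_range, smul_eq_mul]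
      rw [Nat.add_mul, Finset.sum_range_id_mul_two]
      simp only [Nat.succ_sub_one]
      ring
    rw [key]
    have hq : ((∑ i ∈ Finset.range (m+1), (m + i) : ℕ) : ℚ) * 2 = 3 * (m * m) + 3 * m := by
      exact_mod_cast congrArg (Nat.cast : ℕ → ℚ) hsum
    push_cast
    push_cast at hq
    nlinarith [hq]
end

section
/- Let S = ⟨a, b⟩ where 2 ≤ a < b and gcd(a, b) = 1, and write g = (ab − a − b + 1)/2. Then the ordinarization number r(S) is one less than the number of integer points (x, y) ∈ ℕ² satisfying ax + by ≤ g, i.e. r(S) = #{(x,y) ∈ ℕ² : ax + by ≤ g} − 1. -/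
theorem stmt_10 (a b : ℕ) (ha : 2 ≤ a) (hab : a < b) (hcop : Nat.Coprime a b)
    (S : Set ℕ) (hS : S = {m | ∃ x y : ℕ, a * x + b * y = m})
    (g : ℕ) (hg : g = (a * b - a - b + 1) / 2) :
    ordNum S + 1 = {p : ℕ × ℕ | a * p.1 + b * p.2 ≤ g}.ncard := by
  classical
  have hb : 2 ≤ b := by omega
  have hmn : a + b ≤ a * b := Nat.add_le_mul ha hb
  set F := a * b - a - b with hF
  have hFab : F + a + b = a * b := by omega
  have hprod : (a - 1) * (b - 1) = F + 1 := by
    have h1 : ((a-1)+1) * ((b-1)+1) = a * b := by congr 1 <;> omega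
    have h2 : ((a-1)+1) * ((b-1)+1) = (a-1)*(b-1) + (a-1) + (b-1) + 1 := by ring
    omega
  have hF2 : 2 ≤ F + 1 := by
    have : 1 * 2 ≤ (a-1) * (b-1) := Nat.mul_le_mul (by omega) (by omega)
    omega
  -- Frobenius facts
  have hfrob := frobeniusNumber_pair hcop (by omega) (by omega)
  obtain ⟨hfrob1, hfrob2⟩ := hfrob
  have notrep : ∀ x y : ℕ, a * x + b * y ≠ F := by
    intro x y h
    apply hfrob1
    rw [AddSubmonoid.mem_closure_pair]
    exact ⟨x, y, by simpa [smul_eq_mul, mul_comm] using h⟩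
  have rep : ∀ n : ℕ, F < n → ∃ x y : ℕ, a * x + b * y = n := by
    intro n hn
    by_contra hcon
    push_neg at hcon
    have hmem : n ∉ AddSubmonoid.closure ({a, b} : Set ℕ) := by
      rw [AddSubmonoid.mem_closure_pair]
      rintro ⟨x, y, hxy⟩
      exact hcon x y (by simpa [smul_eq_mul, mul_comm] using hxy)
    exact absurd (hfrob2 hmem) (by omega)
  -- injectivity of (x,y) ↦ ax + by on points with value ≤ M < ab
  have inj : ∀ M : ℕ, M < a * b → Set.InjOn (fun p : ℕ × ℕ => a * p.1 + b * p.2)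
      {p : ℕ × ℕ | a * p.1 + b * p.2 ≤ M} := by
    intro M hM
    have key : ∀ p q : ℕ × ℕ, a * p.1 + b * p.2 ≤ M → a * q.1 + b * q.2 ≤ M →
        a * p.1 + b * p.2 = a * q.1 + b * q.2 → p.1 ≤ q.1 → p = q := by
      intro p q hp hq heq hle
      have h2 : a * p.1 ≤ a * q.1 := Nat.mul_le_mul_left a hle
      have e1 : a * q.1 = a * p.1 + a * (q.1 - p.1) := by
        rw [← Nat.mul_add]; congr 1; omega
      have hy2 : q.2 ≤ p.2 := by
        by_contra hy
        have h3 : b * (p.2 + 1) ≤ b * q.2 := Nat.mul_le_mul_left b (by omega)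
        have h4 : b * (p.2 + 1) = b * p.2 + b := by ring
        omega
      have e2 : b * p.2 = b * q.2 + b * (p.2 - q.2) := by
        rw [← Nat.mul_add]; congr 1; omega
      have h1 : a * (q.1 - p.1) = b * (p.2 - q.2) := by omega
      have hdvd : b ∣ (q.1 - p.1) := by
        have hd : b ∣ a * (q.1 - p.1) := by rw [h1]; exact dvd_mul_right b _
        exact Nat.Coprime.dvd_of_dvd_mul_left hcop.symm hd
      have hx1 : q.1 < b := by
        by_contra hx
        push_neg at hx
        have : a * b ≤ a * q.1 := Nat.mul_le_mul_left a hx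
        omega
      have hz : q.1 - p.1 = 0 := by
        rcases Nat.eq_zero_or_pos (q.1 - p.1) with h | h
        · exact h
        · exact absurd (Nat.le_of_dvd h hdvd) (by omega)
      have hx : p.1 = q.1 := by omega
      have hy : p.2 = q.2 := by
        have hax : a * p.1 = a * q.1 := by rw [hx]
        have : b * p.2 = b * q.2 := by omega
        exact Nat.eq_of_mul_eq_mul_left (by omega) this
      exact Prod.ext hx hy
    intro p hp q hq heq
    simp only [Set.mem_setOf_eq] at hp hq
    simp only at heq
    rcases le_total p.1 q.1 with h | h
    · exact key p q hp hq heq h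
    · exact (key q p hq hp heq.symm h).symm
  -- S ∩ [0, M] is the image of the lattice points
  have himg : ∀ M : ℕ, S ∩ Set.Iic M = (fun p : ℕ × ℕ => a * p.1 + b * p.2) ''
      {p : ℕ × ℕ | a * p.1 + b * p.2 ≤ M} := by
    intro M
    ext n
    simp only [hS, Set.mem_inter_iff, Set.mem_setOf_eq, Set.mem_Iic, Set.mem_image]
    constructor
    · rintro ⟨⟨x, y, hxy⟩, hn⟩
      exact ⟨(x, y), by simp only []; omega, hxy⟩
    · rintro ⟨p, hp, hpn⟩
      exact ⟨⟨p.1, p.2, hpn⟩, by omega⟩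
  have hSIic : ∀ M : ℕ, M < a * b →
      (S ∩ Set.Iic M).ncard = {p : ℕ × ℕ | a * p.1 + b * p.2 ≤ M}.ncard := by
    intro M hM
    rw [himg M, Set.ncard_image_of_injOn (inj M hM)]
  -- counting lattice points below F
  set R : Finset (ℕ × ℕ) := Finset.range (b-1) ×ˢ Finset.range (a-1) with hR
  set A : Finset (ℕ × ℕ) := R.filter (fun p => a * p.1 + b * p.2 ≤ F) with hA
  have e3 : a * (b - 1) = F + b := by
    have h : a * (b-1) + a * 1 = a * b := by rw [← Nat.mul_add]; congr 1; omega
    omega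
  have e4 : b * (a - 1) = F + a := by
    have h : b * (a-1) + b * 1 = b * a := by rw [← Nat.mul_add]; congr 1; omega
    have h2 : b * a = a * b := Nat.mul_comm b a
    omega
  have hsetA : {p : ℕ × ℕ | a * p.1 + b * p.2 ≤ F} = ↑A := by
    ext p
    simp only [hA, hR, Finset.coe_filter, Finset.mem_product, Finset.mem_range,
      Set.mem_setOf_eq]
    constructor
    · intro hp
      refine ⟨⟨?_, ?_⟩, hp⟩
      · exact Nat.lt_of_mul_lt_mul_left (a := a) (by omega)
      · exact Nat.lt_of_mul_lt_mul_left (a := b) (by omega)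
    · exact fun h => h.2
  have hAsub : A ⊆ R := Finset.filter_subset _ _
  -- the involution
  set σ : ℕ × ℕ → ℕ × ℕ := fun p => (b - 2 - p.1, a - 2 - p.2) with hσ
  have hσ1 : ∀ p : ℕ × ℕ, (σ p).1 = b - 2 - p.1 := fun p => rfl
  have hσ2 : ∀ p : ℕ × ℕ, (σ p).2 = a - 2 - p.2 := fun p => rfl
  have hmemR : ∀ p : ℕ × ℕ, p ∈ R ↔ p.1 < b - 1 ∧ p.2 < a - 1 := by
    intro p
    simp [hR, Finset.mem_product]
  have hsum : ∀ p ∈ R, a * p.1 + b * p.2 + (a * (σ p).1 + b * (σ p).2) = 2 * F := by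
    intro p hp
    rw [hmemR] at hp
    have e1 : a * p.1 + a * (b - 2 - p.1) = a * (b - 2) := by
      rw [← Nat.mul_add]; congr 1; omega
    have e2 : b * p.2 + b * (a - 2 - p.2) = b * (a - 2) := by
      rw [← Nat.mul_add]; congr 1; omega
    have e5 : a * (b - 2) + a * 2 = a * b := by rw [← Nat.mul_add]; congr 1; omega
    have e6 : b * (a - 2) + b * 2 = b * a := by rw [← Nat.mul_add]; congr 1; omega
    have e7 : b * a = a * b := Nat.mul_comm b a
    rw [hσ1, hσ2]
    omega
  have hsigR : ∀ p ∈ R, σ p ∈ R := by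
    intro p hp
    rw [hmemR] at hp ⊢
    rw [hσ1, hσ2]
    constructor <;> omega
  have hinvol : ∀ p ∈ R, σ (σ p) = p := by
    intro p hp
    rw [hmemR] at hp
    have h1 := hσ1 (σ p); have h2 := hσ2 (σ p)
    have h3 := hσ1 p; have h4 := hσ2 p
    ext
    · rw [h1, h3]; omega
    · rw [h2, h4]; omega
  have hmapA : ∀ p ∈ A, σ p ∈ R \ A := by
    intro p hp
    rw [hA, Finset.mem_filter] at hp
    obtain ⟨hpR, hpF⟩ := hp
    have hne : a * p.1 + b * p.2 ≠ F := notrep p.1 p.2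
    have hs := hsum p hpR
    rw [Finset.mem_sdiff]
    refine ⟨hsigR p hpR, ?_⟩
    rw [hA, Finset.mem_filter]
    rintro ⟨-, h⟩
    omega
  have hmapB : ∀ p ∈ R \ A, σ p ∈ A := by
    intro p hp
    rw [Finset.mem_sdiff, hA, Finset.mem_filter] at hp
    obtain ⟨hpR, hpn⟩ := hp
    have hgt : F < a * p.1 + b * p.2 := by
      by_contra h
      exact hpn ⟨hpR, by omega⟩
    have hs := hsum p hpR
    rw [hA, Finset.mem_filter]
    exact ⟨hsigR p hpR, by omega⟩
  have hcardeq : A.card = (R \ A).card :=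
    Finset.card_bij' (fun p _ => σ p) (fun p _ => σ p) hmapA hmapB
      (fun p hp => hinvol p (hAsub hp))
      (fun p hp => hinvol p (Finset.mem_sdiff.mp hp).1)
  have hRcard : R.card = (b - 1) * (a - 1) := by
    simp [hR]
  have hAle : A.card ≤ R.card := Finset.card_le_card hAsub
  have hsdiff : (R \ A).card = R.card - A.card := Finset.card_sdiff_of_subset hAsub
  have hAcardF : A.card = (F + 1) / 2 := by
    have hcomm : (b - 1) * (a - 1) = (a - 1) * (b - 1) := Nat.mul_comm _ _
    omega
  -- evenness of F + 1
  have heven : 2 ∣ F + 1 := by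
    rw [← hprod]
    have hgcd : Nat.gcd a b = 1 := hcop
    rcases Nat.mod_two_eq_zero_or_one a with h2 | h2
    · have hb2 : b % 2 = 1 := by
        rcases Nat.mod_two_eq_zero_or_one b with h3 | h3
        · exfalso
          have : (2:ℕ) ∣ Nat.gcd a b := Nat.dvd_gcd (by omega) (by omega)
          omega
        · exact h3
      exact Dvd.dvd.mul_left (by omega : (2:ℕ) ∣ b - 1) _
    · exact Dvd.dvd.mul_right (by omega : (2:ℕ) ∣ a - 1) _
  -- genus computation
  have hginj : F < a * b := by omega
  have hcompl : Sᶜ ⊆ Set.Iic F := by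
    intro n hn
    simp only [Set.mem_compl_iff, hS, Set.mem_setOf_eq] at hn
    rw [Set.mem_Iic]
    by_contra h
    push_neg at h
    exact hn (rep n h)
  have hfin : (Sᶜ).Finite := (Set.finite_Iic F).subset hcompl
  have hIic : Set.Iic F = Sᶜ ∪ (S ∩ Set.Iic F) := by
    ext n
    simp only [Set.mem_Iic, Set.mem_union, Set.mem_compl_iff, Set.mem_inter_iff]
    constructor
    · intro h
      by_cases hn : n ∈ S
      · exact Or.inr ⟨hn, h⟩
      · exact Or.inl hn
    · rintro (h | ⟨-, h⟩)
      · exact hcompl h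
      · exact h
  have hdisj : Disjoint Sᶜ (S ∩ Set.Iic F) := by
    rw [Set.disjoint_left]
    rintro n hn ⟨hn2, -⟩
    exact hn hn2
  have hIiccard : (Set.Iic F).ncard = F + 1 := by
    rw [← Finset.coe_Iic, Set.ncard_coe_finset, Nat.card_Iic]
  have hScount : (S ∩ Set.Iic F).ncard = (F + 1) / 2 := by
    rw [hSIic F hginj, hsetA, Set.ncard_coe_finset, hAcardF]
  have hgenus : genus S = (F + 1) / 2 := by
    have h2 := Set.ncard_union_eq hdisj hfin
      ((Set.finite_Iic F).subset Set.inter_subset_right)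
    rw [← hIic, hIiccard] at h2
    unfold genus
    omega
  have hgval : g = (F + 1) / 2 := by omega
  have hg_lt : g < a * b := by omega
  -- splitting off 0
  have h0S : (0:ℕ) ∈ S := by rw [hS]; exact ⟨0, 0, by simp⟩
  have hsplit : S ∩ Set.Iic g = insert 0 (S ∩ Set.Icc 1 g) := by
    ext n
    simp only [Set.mem_inter_iff, Set.mem_Iic, Set.mem_insert_iff, Set.mem_Icc]
    constructor
    · rintro ⟨hn, hng⟩
      rcases Nat.eq_zero_or_pos n with rfl | h
      · exact Or.inl rfl
      · exact Or.inr ⟨hn, h, hng⟩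
    · rintro (rfl | ⟨hn, h1, h2⟩)
      · exact ⟨h0S, Nat.zero_le g⟩
      · exact ⟨hn, h2⟩
  have hfin2 : (S ∩ Set.Icc 1 g).Finite := (Set.finite_Icc 1 g).subset Set.inter_subset_right
  have h0not : (0:ℕ) ∉ S ∩ Set.Icc 1 g := by simp
  have hcard2 : (S ∩ Set.Iic g).ncard = (S ∩ Set.Icc 1 g).ncard + 1 := by
    rw [hsplit, Set.ncard_insert_of_notMem h0not hfin2]
  have hord : ordNum S = (S ∩ Set.Icc 1 g).ncard := by
    unfold ordNum
    rw [hgenus, ← hgval]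
  calc ordNum S + 1 = (S ∩ Set.Icc 1 g).ncard + 1 := by rw [hord]
    _ = (S ∩ Set.Iic g).ncard := hcard2.symm
    _ = {p : ℕ × ℕ | a * p.1 + b * p.2 ≤ g}.ncard := hSIic g hg_lt
end

section
/- Let S = ⟨a, b⟩ where 2 ≤ a < b and gcd(a, b) = 1, and write g = (ab − a − b + 1)/2. Then r(S) = ⌊g/b⌋ + Σ_{n=0}^{⌊g/b⌋} ⌊(g − nb)/a⌋. -/
lemma aux_pair (a b y : ℕ) (ha : 0 < a) (hcop : Nat.Coprime a b)
    (hy1 : 1 ≤ y) (hy2 : y < a) :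
    b * y / a + b * (a - y) / a = b - 1 := by
  generalize hq : b * y / a = q
  have hdm : a * q + b * y % a = b * y := by rw [← hq]; exact Nat.div_add_mod _ _
  generalize hr : b * y % a = r at hdm
  have hra : r < a := by rw [← hr]; exact Nat.mod_lt _ ha
  have hr1 : 1 ≤ r := by
    rcases Nat.eq_zero_or_pos r with h0 | h; swap; · exact h
    exfalso
    have hdvd : a ∣ b * y := by
      have : a ∣ a * q + r := by rw [h0]; exact ⟨q, by ring⟩
      rwa [hdm] at this
    have : a ∣ y := Nat.Coprime.dvd_of_dvd_mul_left hcop hdvd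
    exact absurd (Nat.le_of_dvd (by omega) this) (by omega)
  have hqb : q < b := by
    by_contra h
    push_neg at h
    have h1 : a * b ≤ a * q := Nat.mul_le_mul_left a h
    have hby : b * y ≤ b * (a - 1) := Nat.mul_le_mul_left b (by omega)
    have h2 : b * (a - 1) + b = b * a := by rw [← Nat.mul_succ]; congr 1; omega
    nlinarith [hdm]
  obtain ⟨s, hbs⟩ : ∃ s, b = q + 1 + s := ⟨b - q - 1, by omega⟩
  have key : b * (a - y) = a * s + (a - r) := by
    have h1 : b * (a - y) + b * y = b * a := by rw [← Nat.mul_add]; congr 1; omega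
    have h2 : b * a = a * q + a + a * s := by rw [hbs]; ring
    omega
  have hfin : b * (a - y) / a = s := by
    rw [key, Nat.mul_add_div ha]
    have h9 : (a - r) / a = 0 := Nat.div_eq_of_lt (by omega)
    omega
  rw [hfin]; omega

lemma aux_sum (a b : ℕ) (ha : 2 ≤ a) (hcop : Nat.Coprime a b) :
    2 * ∑ y ∈ Finset.range a, b * y / a = (a - 1) * (b - 1) := by
  obtain ⟨c, rfl⟩ : ∃ c, a = c + 1 := ⟨a - 1, by omega⟩
  rw [Finset.sum_range_succ']
  simp only [Nat.mul_zero, Nat.zero_div, add_zero]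
  have hrefl := Finset.sum_range_reflect (fun j => b * (j + 1) / (c + 1)) c
  have key : ∑ j ∈ Finset.range c, b * (j + 1) / (c + 1)
      + ∑ j ∈ Finset.range c, b * (c - 1 - j + 1) / (c + 1)
      = c * (b - 1) := by
    rw [← Finset.sum_add_distrib]
    rw [show c * (b - 1) = ∑ _j ∈ Finset.range c, (b - 1) by
      rw [Finset.sum_const, smul_eq_mul, Finset.card_range]]
    apply Finset.sum_congr rfl
    intro j hj
    rw [Finset.mem_range] at hj
    have h1 : c - 1 - j + 1 = (c + 1) - (j + 1) := by omega
    rw [h1]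
    exact aux_pair (c + 1) b (j + 1) (by omega) hcop (by omega) (by omega)
  have h2 : (2 : ℕ) * ∑ j ∈ Finset.range c, b * (j + 1) / (c + 1)
      = ∑ j ∈ Finset.range c, b * (j + 1) / (c + 1)
      + ∑ j ∈ Finset.range c, b * (c - 1 - j + 1) / (c + 1) := by
    rw [hrefl]; ring
  rw [h2, key]
  simp

lemma aux_unique_res (a b : ℕ) (hcop : Nat.Coprime a b)
    {y y' : ℕ} (hy : y < a) (hy' : y' < a) (h : b * y ≡ b * y' [MOD a]) : y = y' := by
  have h2 : y ≡ y' [MOD a] := Nat.ModEq.cancel_left_of_coprime hcop h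
  unfold Nat.ModEq at h2
  rwa [Nat.mod_eq_of_lt hy, Nat.mod_eq_of_lt hy'] at h2

lemma aux_exists_res (a b : ℕ) (ha : 2 ≤ a) (hcop : Nat.Coprime a b) (m : ℕ) :
    ∃ y < a, m ≡ b * y [MOD a] := by
  haveI : NeZero a := ⟨by omega⟩
  set u : (ZMod a)ˣ := ZMod.unitOfCoprime b hcop.symm with hu
  refine ⟨((u⁻¹ : (ZMod a)ˣ) * (m : ZMod a)).val, ZMod.val_lt _, ?_⟩
  rw [← ZMod.natCast_eq_natCast_iff]
  push_cast
  rw [ZMod.natCast_val, ZMod.cast_id]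
  have hb : (b : ZMod a) = (u : ZMod a) := (ZMod.coe_unitOfCoprime b hcop.symm).symm
  rw [hb, ← mul_assoc, u.mul_inv, one_mul]

lemma aux_rep (a b m : ℕ) (ha : 0 < a) (h : ∃ x y : ℕ, a * x + b * y = m) :
    ∃ y < a, ∃ x, a * x + b * y = m := by
  obtain ⟨x, y, hxy⟩ := h
  refine ⟨y % a, Nat.mod_lt _ ha, x + b * (y / a), ?_⟩
  have h1 : a * (x + b * (y / a)) + b * (y % a) = a * x + b * (a * (y / a) + y % a) := by ring
  rw [h1, Nat.div_add_mod, hxy]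

lemma aux_res_of_rep (a b m x y : ℕ) (h : a * x + b * y = m) : m ≡ b * y [MOD a] := by
  have h1 : b * y ≡ m [MOD a] := by
    rw [Nat.modEq_iff_dvd' (by omega)]
    exact ⟨x, by omega⟩
  exact h1.symm

lemma aux_char (a b m y : ℕ) (ha : 0 < a) (hcop : Nat.Coprime a b)
    (hy : y < a) (hres : m ≡ b * y [MOD a]) :
    (∃ x y' : ℕ, a * x + b * y' = m) ↔ b * y ≤ m := by
  constructor
  · intro h
    obtain ⟨y', hy', x, he⟩ := aux_rep a b m ha h
    have h1 : m ≡ b * y' [MOD a] := aux_res_of_rep a b m x y' he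
    have : y = y' := aux_unique_res a b hcop hy hy' (hres.symm.trans h1)
    subst this
    omega
  · intro h
    obtain ⟨x, hx⟩ := (Nat.modEq_iff_dvd' h).mp hres.symm
    exact ⟨x, y, by omega⟩

/-- members of the `y`-block of gaps -/
lemma aux_gapmem (a b y m : ℕ) (ha : 0 < a)
    (h : m ∈ (Finset.range (b * y / a)).image (fun k => b * y - a * (k + 1))) :
    m ≡ b * y [MOD a] ∧ m < b * y := by
  obtain ⟨k, hk, hkm⟩ := Finset.mem_image.mp h
  rw [Finset.mem_range] at hk
  have hak : a * (k + 1) ≤ b * y := by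
    have h2 : k + 1 ≤ b * y / a := hk
    have h3 : (k + 1) * a ≤ b * y / a * a := Nat.mul_le_mul_right a h2
    have h4 : b * y / a * a ≤ b * y := Nat.div_mul_le_self (b * y) a
    rw [mul_comm]; omega
  have hapos : 1 ≤ a * (k + 1) := Nat.mul_pos ha (by omega)
  constructor
  · rw [Nat.modEq_iff_dvd' (by omega)]
    exact ⟨k + 1, by omega⟩
  · omega

theorem stmt_11 (a b : ℕ) (ha : 2 ≤ a) (hab : a < b) (hcop : Nat.Coprime a b)
    (S : Set ℕ) (hS : S = {m | ∃ x y : ℕ, a * x + b * y = m})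
    (g : ℕ) (hg : g = (a * b - a - b + 1) / 2) :
    ordNum S = g / b + ∑ n ∈ Finset.range (g / b + 1), (g - n * b) / a := by
  classical
  have ha0 : 0 < a := by omega
  have hb0 : 0 < b := by omega
  have hid : a * b - a - b + 1 = (a - 1) * (b - 1) := by
    obtain ⟨a', rfl⟩ : ∃ a', a = a' + 2 := ⟨a - 2, by omega⟩
    obtain ⟨b', rfl⟩ : ∃ b', b = b' + 3 := ⟨b - 3, by omega⟩
    have h1 : (a' + 2) * (b' + 3) = a' * b' + 3 * a' + 2 * b' + 6 := by ring
    have h2 : (a' + 2 - 1) * (b' + 3 - 1) = a' * b' + 2 * a' + b' + 2 := by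
      have e1 : a' + 2 - 1 = a' + 1 := by omega
      have e2 : b' + 3 - 1 = b' + 2 := by omega
      rw [e1, e2]; ring
    omega
  have heven : Even ((a - 1) * (b - 1)) := by
    rcases Nat.even_or_odd a with he | ho
    · have hbo : ¬ (2 ∣ b) := by
        intro h2b
        have h2a : 2 ∣ a := even_iff_two_dvd.mp he
        have hd := Nat.dvd_gcd h2a h2b
        rw [hcop] at hd
        omega
      have hb1 : Even (b - 1) := by
        rcases Nat.even_or_odd b with h | h
        · exact absurd (even_iff_two_dvd.mp h) hbo
        · exact Nat.Odd.sub_odd h odd_one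
      exact hb1.mul_left _
    · have ha1 : Even (a - 1) := Nat.Odd.sub_odd ho odd_one
      exact ha1.mul_right _
  have hg2 : 2 * g = (a - 1) * (b - 1) := by
    rw [hg, hid]
    obtain ⟨k, hk⟩ := heven
    omega
  have hg1 : 1 ≤ g := by
    have h1 : 1 * 2 ≤ (a - 1) * (b - 1) := Nat.mul_le_mul (by omega) (by omega)
    omega
  have hgab : g < a * b := by
    have h1 : (a - 1) * (b - 1) ≤ a * b := Nat.mul_le_mul (by omega) (by omega)
    omega
  have hmem : ∀ m, m ∈ S ↔ ∃ x y : ℕ, a * x + b * y = m := by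
    intro m; rw [hS]; exact Iff.rfl
  have hchar : ∀ m y, y < a → m ≡ b * y [MOD a] → (m ∈ S ↔ b * y ≤ m) := by
    intro m y hy hres
    rw [hmem]
    exact aux_char a b m y ha0 hcop hy hres
  -- the set of gaps as a Finset
  set G := (Finset.range a).biUnion
      (fun y => (Finset.range (b * y / a)).image (fun k => b * y - a * (k + 1))) with hGdef
  have hSc : Sᶜ = ↑G := by
    ext m
    rw [Set.mem_compl_iff, Finset.mem_coe, hGdef, Finset.mem_biUnion]
    constructor
    · intro hm
      obtain ⟨y, hy, hres⟩ := aux_exists_res a b ha hcop m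
      have hlt : m < b * y := by
        by_contra h
        push_neg at h
        exact hm ((hchar m y hy hres).mpr h)
      obtain ⟨d, hd⟩ := (Nat.modEq_iff_dvd' (le_of_lt hlt)).mp hres
      have hd1 : 1 ≤ d := by
        rcases Nat.eq_zero_or_pos d with h0 | h
        · rw [h0, Nat.mul_zero] at hd; omega
        · exact h
      have hk1 : a * d ≤ b * y := by omega
      have hdle : d ≤ b * y / a := by
        refine (Nat.le_div_iff_mul_le ha0).mpr ?_
        rw [mul_comm]; omega
      refine ⟨y, Finset.mem_range.mpr hy, Finset.mem_image.mpr ⟨d - 1, Finset.mem_range.mpr (by omega), ?_⟩⟩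
      have he : d - 1 + 1 = d := by omega
      rw [he]
      omega
    · rintro ⟨y, hy, hmim⟩ hmS
      rw [Finset.mem_range] at hy
      obtain ⟨hres, hlt⟩ := aux_gapmem a b y m ha0 hmim
      have := (hchar m y hy hres).mp hmS
      omega
  have hcardG : G.card = g := by
    rw [hGdef, Finset.card_biUnion]
    · have hterm : ∀ y ∈ Finset.range a,
          ((Finset.range (b * y / a)).image (fun k => b * y - a * (k + 1))).card = b * y / a := by
        intro y _
        rw [Finset.card_image_of_injOn, Finset.card_range]
        intro k hk k' hk' he
        simp only [Finset.coe_range, Set.mem_Iio] at hk hk'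
        have h1 : a * (k + 1) ≤ b * y := by
          have h3 : (k + 1) * a ≤ b * y / a * a := Nat.mul_le_mul_right a hk
          have h4 : b * y / a * a ≤ b * y := Nat.div_mul_le_self (b * y) a
          rw [mul_comm]; omega
        have h2 : a * (k' + 1) ≤ b * y := by
          have h3 : (k' + 1) * a ≤ b * y / a * a := Nat.mul_le_mul_right a hk'
          have h4 : b * y / a * a ≤ b * y := Nat.div_mul_le_self (b * y) a
          rw [mul_comm]; omega
        have he2 : b * y - a * (k + 1) = b * y - a * (k' + 1) := he
        have h5 : a * (k + 1) = a * (k' + 1) := by omega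
        have h6 := Nat.eq_of_mul_eq_mul_left ha0 h5
        omega
      rw [Finset.sum_congr rfl hterm]
      have hs := aux_sum a b ha hcop
      omega
    · intro y hy y' hy' hne
      rw [Finset.coe_range, Set.mem_Iio] at hy hy'
      rw [Function.onFun, Finset.disjoint_left]
      intro m hm hm'
      obtain ⟨hres, _⟩ := aux_gapmem a b y m ha0 hm
      obtain ⟨hres', _⟩ := aux_gapmem a b y' m ha0 hm'
      exact hne (aux_unique_res a b hcop hy hy' (hres.symm.trans hres'))
  have hgenus : genus S = g := by
    rw [genus, hSc, Set.ncard_coe_finset, hcardG]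
  -- the Finset for the ordinarization count
  have hgba : g / b < a := by
    have h2 := Nat.div_mul_le_self g b
    by_contra h
    push_neg at h
    have h1 : a * b ≤ g / b * b := Nat.mul_le_mul_right b h
    omega
  have hgb : ∀ y, y ≤ g / b → b * y ≤ g := by
    intro y hy
    have h1 : y * b ≤ g / b * b := Nat.mul_le_mul_right b hy
    have h2 := Nat.div_mul_le_self g b
    rw [mul_comm]; omega
  set B := (Finset.range (g / b + 1)).biUnion
      (fun y => (Finset.range ((g - b * y) / a + 1)).image (fun x => a * x + b * y)) with hBdef
  have h0B : (0 : ℕ) ∈ B := by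
    rw [hBdef, Finset.mem_biUnion]
    exact ⟨0, Finset.mem_range.mpr (Nat.succ_pos _),
      Finset.mem_image.mpr ⟨0, Finset.mem_range.mpr (Nat.succ_pos _), by ring⟩⟩
  have hSI : S ∩ Set.Icc 1 g = ↑(B \ {0}) := by
    ext m
    rw [Set.mem_inter_iff, Set.mem_Icc, Finset.mem_coe, Finset.mem_sdiff,
      Finset.mem_singleton, hBdef, Finset.mem_biUnion]
    constructor
    · rintro ⟨hmS, hm1, hmg⟩
      obtain ⟨y, hy, x, he⟩ := aux_rep a b m ha0 ((hmem m).mp hmS)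
      have hby : b * y ≤ m := by omega
      have hyle : y ≤ g / b := by
        refine (Nat.le_div_iff_mul_le hb0).mpr ?_
        rw [mul_comm]; omega
      have hxle : x ≤ (g - b * y) / a := by
        refine (Nat.le_div_iff_mul_le ha0).mpr ?_
        rw [mul_comm]; omega
      exact ⟨⟨y, Finset.mem_range.mpr (by omega),
        Finset.mem_image.mpr ⟨x, Finset.mem_range.mpr (by omega), he⟩⟩, by omega⟩
    · rintro ⟨⟨y, hy, hmim⟩, hm0⟩
      rw [Finset.mem_range] at hy
      obtain ⟨x, hx, he⟩ := Finset.mem_image.mp hmim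
      rw [Finset.mem_range] at hx
      have h1 : a * x ≤ g - b * y := by
        have h2 : x ≤ (g - b * y) / a := by omega
        have h3 : x * a ≤ (g - b * y) / a * a := Nat.mul_le_mul_right a h2
        have h4 : (g - b * y) / a * a ≤ g - b * y := Nat.div_mul_le_self _ a
        rw [mul_comm]; omega
      have hbyg : b * y ≤ g := hgb y (by omega)
      exact ⟨(hmem m).mpr ⟨x, y, he⟩, by omega, by omega⟩
  have hdisjB : ∀ y ∈ Finset.range (g / b + 1), ∀ y' ∈ Finset.range (g / b + 1), y ≠ y' →
      Disjoint ((Finset.range ((g - b * y) / a + 1)).image (fun x => a * x + b * y))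
        ((Finset.range ((g - b * y') / a + 1)).image (fun x => a * x + b * y')) := by
    intro y hy y' hy' hne
    rw [Finset.mem_range] at hy hy'
    rw [Finset.disjoint_left]
    intro m hm hm'
    obtain ⟨x, _, he⟩ := Finset.mem_image.mp hm
    obtain ⟨x', _, he'⟩ := Finset.mem_image.mp hm'
    have hres := aux_res_of_rep a b m x y he
    have hres' := aux_res_of_rep a b m x' y' he'
    exact hne (aux_unique_res a b hcop (by omega) (by omega) (hres.symm.trans hres'))
  have hcardB : B.card = (g / b + 1) + ∑ n ∈ Finset.range (g / b + 1), (g - n * b) / a := by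
    rw [hBdef, Finset.card_biUnion hdisjB]
    have hterm : ∀ y ∈ Finset.range (g / b + 1),
        ((Finset.range ((g - b * y) / a + 1)).image (fun x => a * x + b * y)).card
          = (g - y * b) / a + 1 := by
      intro y _
      rw [Finset.card_image_of_injOn, Finset.card_range, mul_comm b y]
      intro x _ x' _ he
      have he2 : a * x + b * y = a * x' + b * y := he
      have h5 : a * x = a * x' := by omega
      exact Nat.eq_of_mul_eq_mul_left ha0 h5
    rw [Finset.sum_congr rfl hterm, Finset.sum_add_distrib, Finset.sum_const,
      Finset.card_range, smul_eq_mul, mul_one]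
    omega
  rw [ordNum, hgenus, hSI, Set.ncard_coe_finset,
    Finset.card_sdiff_of_subset (Finset.singleton_subset_iff.mpr h0B), hcardB, Finset.card_singleton]
  rw [add_right_comm, Nat.add_sub_cancel]
end

section
/- Let S = ⟨a, b⟩ where 2 ≤ a < b, gcd(a, b) = 1, and a is odd. Then 0 ≤ r(S) − ((ab − a − 4)/8 − (b + 3)/(8a)) ≤ a/4 − 1/(4a). -/
open Finset

-- sum of distinct naturals lower bound
lemma NS_sum_lower : ∀ (n : ℕ) (T : Finset ℕ), T.card = n → n * (n - 1) ≤ 2 * ∑ t ∈ T, t := by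
  intro n
  induction n with
  | zero => simp
  | succ m ih =>
    intro T hT
    have hne : T.Nonempty := Finset.card_pos.mp (by omega)
    set M := T.max' hne with hMdef
    have hM : M ∈ T := T.max'_mem hne
    have hsub : T ⊆ range (M + 1) := by
      intro t ht
      simp only [mem_range]
      have := T.le_max' t ht
      omega
    have hMm : m ≤ M := by
      have := Finset.card_le_card hsub
      simp [hT] at this; omega
    have hT' : (T.erase M).card = m := by rw [Finset.card_erase_of_mem hM, hT]; omega
    have hih := ih (T.erase M) hT'
    have hsum : ∑ t ∈ T, t = M + ∑ t ∈ T.erase M, t := (Finset.add_sum_erase T id hM).symm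
    rw [hsum, Nat.add_sub_cancel]
    cases m with
    | zero => simp
    | succ k =>
      simp only [Nat.add_sub_cancel] at hih
      nlinarith

lemma NS_sum_upper (A : ℕ) (T : Finset ℕ) (hT : ∀ t ∈ T, t < A) :
    2 * ∑ t ∈ T, t ≤ T.card * (2 * A - T.card - 1) := by
  rcases Finset.eq_empty_or_nonempty T with rfl | hne
  · simp
  have hA : 1 ≤ A := by
    obtain ⟨t, ht⟩ := hne
    have := hT t ht; omega
  set T' := T.image (fun t => A - 1 - t) with hT'def
  have hinj : Set.InjOn (fun t => A - 1 - t) T := by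
    intro x hx y hy hxy
    have hx' := hT x hx; have hy' := hT y hy
    simp only at hxy; omega
  have hcard : T'.card = T.card := Finset.card_image_of_injOn hinj
  have hsum : ∑ t ∈ T', t + ∑ t ∈ T, t = T.card * (A - 1) := by
    rw [hT'def, Finset.sum_image hinj, ← Finset.sum_add_distrib]
    rw [Finset.sum_congr rfl (fun t ht => show A - 1 - t + t = A - 1 by have := hT t ht; omega)]
    simp [mul_comm]
  have hlow := NS_sum_lower T'.card T' rfl
  rw [hcard] at hlow
  have hcardA : T.card ≤ A := by
    have : T ⊆ range A := fun t ht => mem_range.mpr (hT t ht)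
    simpa using Finset.card_le_card this
  set n := T.card
  have hn : 1 ≤ n := Finset.card_pos.mpr hne
  zify [hA, hn, show n ≤ 2*A by omega, show 1 ≤ 2*A - n by omega] at hlow hsum ⊢
  nlinarith

section count
variable {a b : ℕ}

lemma NS_rep (ha : 0 < a) (m : ℕ) (h : ∃ x y : ℕ, a * x + b * y = m) :
    ∃ x y : ℕ, y < a ∧ a * x + b * y = m := by
  obtain ⟨x, y, rfl⟩ := h
  refine ⟨x + b * (y / a), y % a, Nat.mod_lt _ ha, ?_⟩
  have h1 : a * (y / a) + y % a = y := Nat.div_add_mod y a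
  calc a * (x + b * (y / a)) + b * (y % a)
      = a * x + b * (a * (y / a) + y % a) := by ring
    _ = a * x + b * y := by rw [h1]

lemma NS_inj (ha : 0 < a) (hcop : Nat.Coprime a b) {x y x' y' : ℕ} (hy : y < a) (hy' : y' < a)
    (h : a * x + b * y = a * x' + b * y') : x = x' ∧ y = y' := by
  have h1 : b * y ≡ b * y' [MOD a] := by
    have h2 : (a * x + b * y) % a = (a * x' + b * y') % a := by rw [h]
    have h3 : b * y % a = b * y' % a := by simpa [Nat.mul_add_mod] using h2
    exact h3
  have h3 : y ≡ y' [MOD a] := Nat.ModEq.cancel_left_of_coprime hcop h1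
  have h4 : y = y' := by
    rwa [Nat.ModEq, Nat.mod_eq_of_lt hy, Nat.mod_eq_of_lt hy'] at h3
  subst h4
  exact ⟨Nat.eq_of_mul_eq_mul_left ha (by omega), rfl⟩

open Classical in
lemma NS_count (ha : 0 < a) (hcop : Nat.Coprime a b) (N : ℕ) :
    ((Finset.Icc 1 N).filter (fun m => ∃ x y : ℕ, a * x + b * y = m)).card + 1 =
    ∑ y ∈ range a, if b * y ≤ N then (N - b * y) / a + 1 else 0 := by
  have key : ((Finset.Icc 0 N).filter (fun m => ∃ x y : ℕ, a * x + b * y = m)).card =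
      ∑ y ∈ range a, if b * y ≤ N then (N - b * y) / a + 1 else 0 := by
    have hset : (Finset.Icc 0 N).filter (fun m => ∃ x y : ℕ, a * x + b * y = m) =
        (range a).biUnion (fun y =>
          ((range (N + 1)).filter (fun x => a * x + b * y ≤ N)).image
            (fun x => a * x + b * y)) := by
      ext m
      simp only [Finset.mem_filter, Finset.mem_Icc, Finset.mem_biUnion, Finset.mem_image,
        Finset.mem_range]
      constructor
      · rintro ⟨hmN, hm⟩
        obtain ⟨x, y, hya, hxy⟩ := NS_rep ha m hm
        have hx : x ≤ a * x := Nat.le_mul_of_pos_left x ha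
        exact ⟨y, hya, x, ⟨by omega, by omega⟩, hxy⟩
      · rintro ⟨y, hya, x, ⟨hx, hle⟩, rfl⟩
        exact ⟨by omega, x, y, rfl⟩
    rw [hset, Finset.card_biUnion]
    · apply Finset.sum_congr rfl
      intro y hy
      rw [Finset.card_image_of_injOn (fun x _ x' _ hxx' => by
        exact (NS_inj ha hcop (mem_range.mp hy) (mem_range.mp hy) hxx').1)]
      by_cases hby : b * y ≤ N
      · rw [if_pos hby]
        have hfe : (range (N + 1)).filter (fun x => a * x + b * y ≤ N) =
            range ((N - b * y) / a + 1) := by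
          ext x
          simp only [Finset.mem_filter, Finset.mem_range]
          constructor
          · rintro ⟨-, hx2⟩
            have : x * a ≤ N - b * y := by
              have : x * a = a * x := mul_comm _ _
              omega
            have := (Nat.le_div_iff_mul_le ha).mpr this
            omega
          · intro hx
            have hx' : x ≤ (N - b * y) / a := by omega
            have h1 : x * a ≤ N - b * y := (Nat.le_div_iff_mul_le ha).mp hx'
            have h2 : (N - b * y) / a ≤ N := le_trans (Nat.div_le_self _ _) (by omega)
            constructor
            · omega
            · have : a * x = x * a := mul_comm _ _
              omega
        rw [hfe, Finset.card_range]
      · rw [if_neg hby]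
        convert Finset.card_empty
        rw [Finset.filter_eq_empty_iff]
        intro x _
        omega
    · intro y hy y' hy' hyy'
      apply Finset.disjoint_left.mpr
      rintro m hm hm'
      simp only [Finset.mem_image, Finset.mem_filter, Finset.mem_range] at hm hm'
      obtain ⟨x, -, rfl⟩ := hm
      obtain ⟨x', -, hx'⟩ := hm'
      exact hyy' ((NS_inj ha hcop (mem_range.mp hy') (mem_range.mp hy) hx').2.symm)
  rw [← key]
  have h0 : (Finset.Icc 0 N) = insert 0 (Finset.Icc 1 N) := by
    ext x; simp only [Finset.mem_Icc, Finset.mem_insert]; omega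
  rw [h0, Finset.filter_insert, if_pos ⟨0, 0, by ring⟩,
    Finset.card_insert_of_notMem (fun h => by simp at h)]

end count

lemma NS_large (ha : 0 < a) (hb : 0 < b) (hcop : Nat.Coprime a b) (m : ℕ)
    (hm : a * b - a - b < m) : ∃ x y : ℕ, a * x + b * y = m := by
  haveI : NeZero a := ⟨by omega⟩
  set u : (ZMod a)ˣ := ZMod.unitOfCoprime b hcop.symm with hu
  set y : ℕ := ((u⁻¹ : (ZMod a)ˣ) * (m : ZMod a) : ZMod a).val with hy
  have hya : y < a := ZMod.val_lt _
  have hmod : b * y ≡ m [MOD a] := by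
    rw [← ZMod.natCast_eq_natCast_iff]
    push_cast
    rw [hy, ZMod.natCast_val, ZMod.cast_id]
    have hub : (u : ZMod a) = b := ZMod.coe_unitOfCoprime b hcop.symm
    rw [← hub]
    exact Units.mul_inv_cancel_left u _
  have hby : b * y ≤ b * (a - 1) := Nat.mul_le_mul_left b (by omega)
  have hba : b * (a - 1) + b = b * a := by
    rw [← Nat.mul_succ]
    congr 1
    omega
  have hab' : b * a = a * b := mul_comm b a
  by_cases hle : b * y ≤ m
  · obtain ⟨x, hx⟩ := (Nat.modEq_iff_dvd' hle).mp hmod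
    exact ⟨x, y, by omega⟩
  · exfalso
    obtain ⟨k, hk⟩ := (Nat.modEq_iff_dvd' (by omega : m ≤ b * y)).mp hmod.symm
    have hk0 : 0 < k := by
      rcases Nat.eq_zero_or_pos k with rfl | h
      · omega
      · exact h
    have : a * 1 ≤ a * k := Nat.mul_le_mul_left a hk0
    omega

lemma NS_ndvd (ha : 0 < a) (hcop : Nat.Coprime a b) {j : ℕ} (hj0 : 0 < j) (hja : j < a) :
    ¬ (a ∣ b * j) := by
  intro hdvd
  have : a ∣ j := (Nat.Coprime.dvd_of_dvd_mul_left hcop hdvd)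
  have := Nat.le_of_dvd hj0 this
  omega

lemma NS_pair (ha : 0 < a) (hcop : Nat.Coprime a b) {j : ℕ} (hj0 : 0 < j) (hja : j < a) :
    b * j / a + b * (a - j) / a + 1 = b := by
  have h1 : b * j + b * (a - j) = b * a := by
    rw [← Nat.mul_add]
    congr 1
    omega
  have hd := Nat.add_div (a := b * j) (b := b * (a - j)) ha
  rw [h1, Nat.mul_div_cancel _ ha] at hd
  have hr1 : 0 < b * j % a := Nat.pos_of_ne_zero fun h =>
    NS_ndvd ha hcop hj0 hja (Nat.dvd_of_mod_eq_zero h)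
  have hr2 : 0 < b * (a - j) % a := Nat.pos_of_ne_zero fun h =>
    NS_ndvd ha hcop (by omega) (by omega) (Nat.dvd_of_mod_eq_zero h)
  have hr1' : b * j % a < a := Nat.mod_lt _ ha
  have hr2' : b * (a - j) % a < a := Nat.mod_lt _ ha
  have hsum : (b * j % a + b * (a - j) % a) % a = 0 := by
    rw [← Nat.add_mod, h1]
    simp [Nat.mul_mod_left, Nat.mul_mod_right]
  have heq : b * j % a + b * (a - j) % a = a := by
    have h2a : b * j % a + b * (a - j) % a < 2 * a := by omega
    rcases Nat.lt_or_ge (b * j % a + b * (a - j) % a) a with h | h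
    · rw [Nat.mod_eq_of_lt h] at hsum; omega
    · have : b * j % a + b * (a - j) % a - a < a := by omega
      have hm2 : (b * j % a + b * (a - j) % a) % a
          = (b * j % a + b * (a - j) % a - a) % a := by
        conv_lhs => rw [← Nat.sub_add_cancel h, Nat.add_mod_right]
      rw [hm2, Nat.mod_eq_of_lt this] at hsum
      omega
  rw [if_pos (by omega : a ≤ b * j % a + b * (a - j) % a)] at hd
  omega

lemma NS_sylv (ha : 0 < a) (hb : 0 < b) (hcop : Nat.Coprime a b) :
    2 * ∑ j ∈ range (a - 1), b * (j + 1) / a = (a - 1) * (b - 1) := by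
  have hrefl := Finset.sum_range_reflect (fun j => b * (j + 1) / a) (a - 1)
  have hcongr : ∑ j ∈ range (a - 1), b * (a - 1 - 1 - j + 1) / a
      = ∑ j ∈ range (a - 1), b * (a - 1 - j) / a := by
    apply Finset.sum_congr rfl
    intro j hj
    have := mem_range.mp hj
    congr 2
    omega
  have hpair : ∑ j ∈ range (a - 1), (b * (j + 1) / a + b * (a - 1 - j) / a + 1)
      = ∑ j ∈ range (a - 1), b := by
    apply Finset.sum_congr rfl
    intro j hj
    have hj' := mem_range.mp hj
    have := NS_pair ha hcop (j := j + 1) (by omega) (by omega)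
    have hinterm : a - (j + 1) = a - 1 - j := by omega
    rw [hinterm] at this
    omega
  rw [Finset.sum_add_distrib, Finset.sum_add_distrib] at hpair
  rw [hcongr] at hrefl
  rw [Finset.sum_const, Finset.card_range, smul_eq_mul, Finset.sum_const,
    Finset.card_range, smul_eq_mul, mul_one] at hpair
  have : (a - 1) * (b - 1) + (a - 1) = (a - 1) * b := by
    rw [← Nat.mul_succ]
    congr 1
    omega
  have hA : 0 < a - 1 ∨ a - 1 = 0 := by omega
  linarith [Nat.sub_le a 1]

set_option maxHeartbeats 2000000 in
theorem stmt_12 (a b : ℕ) (ha : 2 ≤ a) (hab : a < b) (hcop : Nat.Coprime a b)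
    (hodd : Odd a)
    (S : Set ℕ) (hS : S = {m | ∃ x y : ℕ, a * x + b * y = m}) :
    0 ≤ (ordNum S : ℚ) -
        (((a : ℚ) * b - a - 4) / 8 - ((b : ℚ) + 3) / (8 * a)) ∧
      (ordNum S : ℚ) -
        (((a : ℚ) * b - a - 4) / 8 - ((b : ℚ) + 3) / (8 * a)) ≤
        (a : ℚ) / 4 - 1 / (4 * a) := by
  classical
  obtain ⟨c, rfl⟩ := hodd
  obtain ⟨d, rfl⟩ : ∃ d, b = d + 1 := ⟨b - 1, by omega⟩
  have hc1 : 1 ≤ c := by omega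
  have hd : 2 * c + 1 ≤ d := by omega
  have ha0 : 0 < 2 * c + 1 := by omega
  have hb0 : 0 < d + 1 := by omega
  set g : ℕ := c * d with hgdef
  have hg1 : c ≤ g := Nat.le_mul_of_pos_right c (by omega)
  -- genus computation
  set F₀ : ℕ := 2 * (c * d) - 1 with hF0def
  have hF0eq : (2 * c + 1) * (d + 1) - (2 * c + 1) - (d + 1) = F₀ := by
    have h1 : (2 * c + 1) * (d + 1) = 2 * (c * d) + 2 * c + d + 1 := by ring
    omega
  have hlarge : ∀ m : ℕ, F₀ < m → ∃ x y : ℕ, (2 * c + 1) * x + (d + 1) * y = m := by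
    intro m hm
    exact NS_large ha0 hb0 hcop m (by omega)
  have hSc : Sᶜ = ↑((Finset.Icc 1 F₀).filter
      (fun m => ¬ ∃ x y : ℕ, (2 * c + 1) * x + (d + 1) * y = m)) := by
    ext m
    simp only [Set.mem_compl_iff, hS, Set.mem_setOf_eq, Finset.coe_filter, Finset.mem_Icc,
      Set.mem_setOf_eq]
    constructor
    · intro hm
      refine ⟨⟨?_, ?_⟩, hm⟩
      · rcases Nat.eq_zero_or_pos m with rfl | h
        · exact absurd ⟨0, 0, by ring⟩ hm
        · omega
      · by_contra h
        exact hm (hlarge m (by omega))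
    · rintro ⟨⟨-, -⟩, hnP⟩
      exact hnP
  -- the sum at F₀
  have hcount0 := NS_count ha0 hcop F₀
  have hSF : ∑ y ∈ range (2 * c + 1),
      (if (d + 1) * y ≤ F₀ then (F₀ - (d + 1) * y) / (2 * c + 1) + 1 else 0) = c * d := by
    rw [Finset.sum_range_succ, if_neg (by
      have h1 : (d + 1) * (2 * c) = 2 * (c * d) + 2 * c := by ring
      omega)]
    have hstep : ∀ y ∈ range (2 * c),
        (if (d + 1) * y ≤ F₀ then (F₀ - (d + 1) * y) / (2 * c + 1) + 1 else 0)
        = (F₀ - (d + 1) * y) / (2 * c + 1) + 1 := by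
      intro y hy
      have hy' := mem_range.mp hy
      have h1 : (d + 1) * (y + 1) ≤ (d + 1) * (2 * c) := Nat.mul_le_mul_left _ (by omega)
      have h2 : (d + 1) * (y + 1) = (d + 1) * y + (d + 1) := by ring
      have h3 : (d + 1) * (2 * c) = 2 * (c * d) + 2 * c := by ring
      rw [if_pos (by omega)]
    rw [Finset.sum_congr rfl hstep]
    have hrefl := Finset.sum_range_reflect
      (fun y => (F₀ - (d + 1) * y) / (2 * c + 1) + 1) (2 * c)
    rw [← hrefl]
    have hstep2 : ∀ j ∈ range (2 * c),
        (F₀ - (d + 1) * (2 * c - 1 - j)) / (2 * c + 1) + 1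
        = (d + 1) * (j + 1) / (2 * c + 1) := by
      intro j hj
      have hj' := mem_range.mp hj
      have e1 : (d + 1) * (2 * c - 1 - j) + (d + 1) * (j + 1) = (d + 1) * (2 * c) := by
        rw [← Nat.mul_add]
        congr 1
        omega
      have e2 : (d + 1) * (2 * c) = 2 * (c * d) + 2 * c := by ring
      have e3 : d + 1 ≤ (d + 1) * (j + 1) := Nat.le_mul_of_pos_right _ (by omega)
      have e4 : F₀ - (d + 1) * (2 * c - 1 - j) = (d + 1) * (j + 1) - (2 * c + 1) := by omega
      rw [e4, ← Nat.div_eq_sub_div ha0 (by omega)]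
    rw [Finset.sum_congr rfl hstep2]
    have hsylv := NS_sylv ha0 hb0 hcop
    rw [show 2 * c + 1 - 1 = 2 * c from by omega, show d + 1 - 1 = d from by omega] at hsylv
    have : 2 * c * d = 2 * (c * d) := by ring
    omega
  have hgenus : genus S = g := by
    have hsplit := Finset.card_filter_add_card_filter_not
      (s := Finset.Icc 1 F₀) (p := fun m => ∃ x y : ℕ, (2 * c + 1) * x + (d + 1) * y = m)
    have hcard : (Finset.Icc 1 F₀).card = F₀ := by simp
    rw [genus, hSc, Set.ncard_coe_finset]
    rw [hSF] at hcount0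
    omega
  -- ordinarization number
  have hScount : ordNum S = ((Finset.Icc 1 g).filter
      (fun m => ∃ x y : ℕ, (2 * c + 1) * x + (d + 1) * y = m)).card := by
    rw [ordNum, hgenus]
    have : S ∩ Set.Icc 1 g = ↑((Finset.Icc 1 g).filter
        (fun m => ∃ x y : ℕ, (2 * c + 1) * x + (d + 1) * y = m)) := by
      ext m
      simp only [Set.mem_inter_iff, hS, Set.mem_setOf_eq, Set.mem_Icc, Finset.coe_filter,
        Finset.mem_Icc, Set.mem_setOf_eq]
      tauto
    rw [this, Set.ncard_coe_finset]
  have hcount1 := NS_count ha0 hcop g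
  have hsumg : ∑ y ∈ range (2 * c + 1),
      (if (d + 1) * y ≤ g then (g - (d + 1) * y) / (2 * c + 1) + 1 else 0)
      = c + ∑ y ∈ range c, (g - (d + 1) * y) / (2 * c + 1) := by
    rw [← Finset.sum_subset (Finset.range_subset_range.mpr (by omega : c ≤ 2 * c + 1))
      (fun y _ hy => by
        have hy' : c ≤ y := by simpa using hy
        have h1 : (d + 1) * c ≤ (d + 1) * y := Nat.mul_le_mul_left _ hy'
        have h2 : (d + 1) * c = c * d + c := by ring
        exact if_neg (by omega))]
    have hstep : ∀ y ∈ range c,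
        (if (d + 1) * y ≤ g then (g - (d + 1) * y) / (2 * c + 1) + 1 else 0)
        = (g - (d + 1) * y) / (2 * c + 1) + 1 := by
      intro y hy
      have hy' := mem_range.mp hy
      have h1 : (d + 1) * (y + 1) ≤ (d + 1) * c := Nat.mul_le_mul_left _ (by omega)
      have h2 : (d + 1) * (y + 1) = (d + 1) * y + (d + 1) := by ring
      have h3 : (d + 1) * c = c * d + c := by ring
      rw [if_pos (by omega)]
    rw [Finset.sum_congr rfl hstep, Finset.sum_add_distrib, Finset.sum_const,
      Finset.card_range, smul_eq_mul, mul_one, add_comm]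
  have hby : ∀ y < c, (d + 1) * y + c ≤ g := by
    intro y hy
    have h1 : (d + 1) * (y + 1) ≤ (d + 1) * c := Nat.mul_le_mul_left _ (by omega)
    have h2 : (d + 1) * (y + 1) = (d + 1) * y + (d + 1) := by ring
    have h3 : (d + 1) * c = c * d + c := by ring
    omega
  set G : ℕ := ∑ y ∈ range c, (g - (d + 1) * y) / (2 * c + 1) with hGdef
  set R : ℕ := ∑ y ∈ range c, (g - (d + 1) * y) % (2 * c + 1) with hRdef
  have hordG : ordNum S + 1 = c + G := by
    rw [hScount]
    rw [hsumg] at hcount1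
    omega
  -- main identity
  have hmainN : (2 * c + 1) * G + R + (d + 1) * (∑ y ∈ range c, y) = c * g := by
    have hterm : ∀ y ∈ range c,
        (2 * c + 1) * ((g - (d + 1) * y) / (2 * c + 1)) + (g - (d + 1) * y) % (2 * c + 1)
          + (d + 1) * y = g := by
      intro y hy
      have h1 := Nat.div_add_mod (g - (d + 1) * y) (2 * c + 1)
      have h2 := hby y (mem_range.mp hy)
      omega
    have hsum := Finset.sum_congr rfl hterm
    rw [Finset.sum_add_distrib, Finset.sum_add_distrib, ← Finset.mul_sum, ← Finset.mul_sum,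
      Finset.sum_const, Finset.card_range, smul_eq_mul] at hsum
    rw [hGdef, hRdef]
    omega
  have hsy : 2 * (∑ y ∈ range c, y) = c * (c - 1) := by
    have := Finset.sum_range_id_mul_two c
    omega
  -- residue bounds
  have hinj : Set.InjOn (fun y => (g - (d + 1) * y) % (2 * c + 1)) (range c) := by
    intro y hy y' hy' hyy'
    simp only [Finset.coe_range, Set.mem_Iio] at hy hy'
    have h : (g - (d + 1) * y) ≡ (g - (d + 1) * y') [MOD 2 * c + 1] := hyy'
    have h2 := h.add_right ((d + 1) * y + (d + 1) * y')
    have e1 : g - (d + 1) * y + ((d + 1) * y + (d + 1) * y') = g + (d + 1) * y' := by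
      have := hby y hy; omega
    have e2 : g - (d + 1) * y' + ((d + 1) * y + (d + 1) * y') = g + (d + 1) * y := by
      have := hby y' hy'; omega
    rw [e1, e2] at h2
    have h3 := Nat.ModEq.add_left_cancel' g h2
    have h4 : y' ≡ y [MOD 2 * c + 1] := Nat.ModEq.cancel_left_of_coprime hcop h3
    have h5 : y' % (2 * c + 1) = y % (2 * c + 1) := h4
    rw [Nat.mod_eq_of_lt (by omega), Nat.mod_eq_of_lt (by omega)] at h5
    omega
  have hRim : R = ∑ t ∈ (range c).image (fun y => (g - (d + 1) * y) % (2 * c + 1)), t := by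
    rw [Finset.sum_image hinj]
  have hTcard : ((range c).image (fun y => (g - (d + 1) * y) % (2 * c + 1))).card = c := by
    rw [Finset.card_image_of_injOn hinj, Finset.card_range]
  have hRlow : c * (c - 1) ≤ 2 * R := by
    have := NS_sum_lower c _ hTcard
    omega
  have hRup : 2 * R ≤ c * (3 * c + 1) := by
    have hlt : ∀ t ∈ (range c).image (fun y => (g - (d + 1) * y) % (2 * c + 1)),
        t < 2 * c + 1 := by
      intro t ht
      simp only [Finset.mem_image] at ht
      obtain ⟨y, -, rfl⟩ := ht
      exact Nat.mod_lt _ ha0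
    have := NS_sum_upper (2 * c + 1) _ hlt
    rw [hTcard] at this
    have he : c * (2 * (2 * c + 1) - c - 1) = c * (3 * c + 1) := by
      congr 1
      omega
    omega
  -- pass to ℚ
  have hc1Q : (1 : ℚ) ≤ c := by exact_mod_cast hc1
  have hdQ : 2 * (c : ℚ) + 1 ≤ d := by exact_mod_cast hd
  have e1 : (ordNum S : ℚ) + 1 = (c:ℚ) + G := by exact_mod_cast hordG
  have e2 : (2 * (c:ℚ) + 1) * G + R + ((d:ℚ) + 1) * (∑ y ∈ range c, y : ℕ) = (c:ℚ) * ((c:ℚ) * (d:ℚ)) := by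
    have h := hmainN
    rw [hgdef] at h
    exact_mod_cast h
  have e3 : 2 * ((∑ y ∈ range c, y : ℕ) : ℚ) = (c:ℚ) * ((c:ℚ) - 1) := by
    have : ((c : ℕ) : ℚ) * ((c : ℕ) - 1 : ℚ) = ((c * (c - 1) : ℕ) : ℚ) := by
      push_cast [Nat.cast_sub hc1]
      ring
    rw [this]
    exact_mod_cast hsy
  have e4l : (c:ℚ) * ((c:ℚ) - 1) ≤ 2 * (R : ℚ) := by
    have : ((c * (c - 1) : ℕ) : ℚ) = (c:ℚ) * ((c:ℚ) - 1) := by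
      push_cast [Nat.cast_sub hc1]
      ring
    rw [← this]
    exact_mod_cast hRlow
  have e4r : 2 * (R : ℚ) ≤ (c:ℚ) * (3 * (c:ℚ) + 1) := by
    have : ((c * (3 * c + 1) : ℕ) : ℚ) = (c:ℚ) * (3 * (c:ℚ) + 1) := by push_cast; ring
    rw [← this]
    exact_mod_cast hRup
  have hcomb : 8 * (2 * (c:ℚ) + 1) * (ordNum S : ℚ) + 8 * (R:ℚ)
      + 4 * ((d:ℚ) + 1) * ((c:ℚ) * ((c:ℚ) - 1)) + 8 * (2 * (c:ℚ) + 1)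
      = 8 * ((c:ℚ) * ((c:ℚ) * (d:ℚ))) + 8 * (2 * (c:ℚ) + 1) * (c:ℚ) := by
    linear_combination 8 * e2 + (8 * (2 * (c:ℚ) + 1)) * e1 - 4 * ((d:ℚ) + 1) * e3
  have key1 : ((2 * (c:ℚ) + 1) * ((d:ℚ) + 1) - (2 * (c:ℚ) + 1) - 4) * (2 * (c:ℚ) + 1) - (((d:ℚ) + 1) + 3)
      ≤ 8 * (2 * (c:ℚ) + 1) * (ordNum S : ℚ) := by linarith [hcomb, e4r]
  have key2 : 8 * (2 * (c:ℚ) + 1) * (ordNum S : ℚ)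
      ≤ ((2 * (c:ℚ) + 1) * ((d:ℚ) + 1) - (2 * (c:ℚ) + 1) - 4) * (2 * (c:ℚ) + 1) - (((d:ℚ) + 1) + 3)
        + 2 * (2 * (c:ℚ) + 1) * (2 * (c:ℚ) + 1) - 2 := by linarith [hcomb, e4l]
  have hCpos : (0 : ℚ) < 2 * (c:ℚ) + 1 := by linarith
  have hden : (0 : ℚ) < 8 * (2 * (c:ℚ) + 1) := by linarith
  have hcastA : ((2 * c + 1 : ℕ) : ℚ) = 2 * (c:ℚ) + 1 := by push_cast; ring
  have hcastB : ((d + 1 : ℕ) : ℚ) = (d:ℚ) + 1 := by push_cast; ring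
  rw [hcastA, hcastB]
  have hE : ((2 * (c:ℚ) + 1) * ((d:ℚ) + 1) - (2 * (c:ℚ) + 1) - 4) / 8 - (((d:ℚ) + 1) + 3) / (8 * (2 * (c:ℚ) + 1))
      = (((2 * (c:ℚ) + 1) * ((d:ℚ) + 1) - (2 * (c:ℚ) + 1) - 4) * (2 * (c:ℚ) + 1) - (((d:ℚ) + 1) + 3))
        / (8 * (2 * (c:ℚ) + 1)) := by
    field_simp
  have hQuarter : (2 * (c:ℚ) + 1) / 4 - 1 / (4 * (2 * (c:ℚ) + 1))
      = (2 * (2 * (c:ℚ) + 1) * (2 * (c:ℚ) + 1) - 2) / (8 * (2 * (c:ℚ) + 1)) := by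
    field_simp
    ring
  constructor
  · rw [hE, sub_nonneg, div_le_iff₀ hden]
    linarith [key1]
  · rw [hE, hQuarter, sub_le_iff_le_add, ← add_div, le_div_iff₀ hden]
    linarith [key2]
end

section
/- Let S = ⟨a, b⟩ where 2 ≤ a < b, gcd(a, b) = 1, and a is even. Then 0 ≤ r(S) − (ab − a − 4)/8 ≤ a/4. -/
section NSaux

open Finset

def NS (a b : ℕ) : Set ℕ := {m | ∃ x y : ℕ, a * x + b * y = m}

lemma mem_NS_iff {a b m : ℕ} (ha : 0 < a) :
    m ∈ NS a b ↔ ∃ y < a, b * y ≤ m ∧ m ≡ b * y [MOD a] := by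
  constructor
  · rintro ⟨x, y, rfl⟩
    refine ⟨y % a, Nat.mod_lt _ ha, ?_, ?_⟩
    · exact le_add_self.trans' (Nat.mul_le_mul_left b (Nat.mod_le y a))
    · calc a * x + b * y ≡ 0 + b * (y % a) [MOD a] :=
            Nat.ModEq.add (Nat.modEq_zero_iff_dvd.mpr ⟨x, rfl⟩)
              ((Nat.mod_modEq y a).symm.mul_left b)
        _ = b * (y % a) := by ring
  · rintro ⟨y, hy, hle, hmod⟩
    obtain ⟨k, hk⟩ := (Nat.modEq_iff_dvd' hle).mp hmod.symm
    exact ⟨k, y, by omega⟩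

lemma res_uniq {a b y y' : ℕ} (hcop : Nat.Coprime a b) (hy : y < a) (hy' : y' < a)
    (h : b * y ≡ b * y' [MOD a]) : y = y' := by
  have h2 : y ≡ y' [MOD a] := h.cancel_left_of_coprime hcop
  have h3 : y % a = y' % a := h2
  rwa [Nat.mod_eq_of_lt hy, Nat.mod_eq_of_lt hy'] at h3

lemma exists_res {a b : ℕ} (ha : 2 ≤ a) (hcop : Nat.Coprime a b) (m : ℕ) :
    ∃ y < a, m ≡ b * y [MOD a] := by
  haveI : NeZero a := ⟨by omega⟩
  refine ⟨((m : ZMod a) * ((ZMod.unitOfCoprime b hcop.symm)⁻¹ : (ZMod a)ˣ)).val,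
    ZMod.val_lt _, ?_⟩
  have h : ((b * ((m : ZMod a) * ((ZMod.unitOfCoprime b hcop.symm)⁻¹ : (ZMod a)ˣ)).val : ℕ) : ZMod a) = (m : ZMod a) := by
    push_cast [ZMod.natCast_val, ZMod.cast_id]
    have h1 : ((b : ZMod a)) * ((ZMod.unitOfCoprime b hcop.symm)⁻¹ : (ZMod a)ˣ) = 1 := by
      rw [← ZMod.coe_unitOfCoprime b hcop.symm, ← Units.val_mul, mul_inv_cancel, Units.val_one]
    calc (b : ZMod a) * ((m : ZMod a) * ((ZMod.unitOfCoprime b hcop.symm)⁻¹ : (ZMod a)ˣ))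
        = (m : ZMod a) * ((b : ZMod a) * ((ZMod.unitOfCoprime b hcop.symm)⁻¹ : (ZMod a)ˣ)) := by ring
      _ = m := by rw [h1, mul_one]
  exact ((ZMod.natCast_eq_natCast_iff _ _ _).mp h).symm

section frob
variable {a b : ℕ} (ha : 2 ≤ a) (hab : a < b) (hcop : Nat.Coprime a b)

include ha hab hcop

lemma F_notin : a * b - a - b ∉ NS a b := by
  rintro h
  rw [mem_NS_iff (by omega)] at h
  obtain ⟨y, hy, hle, hmod⟩ := h
  have hab2 : a + b ≤ a * b := by nlinarith
  have hdvdZ : (a:ℤ) ∣ (b * y - (a*b - a - b : ℕ)) := hmod.dvd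
  have hcast : ((a*b - a - b : ℕ) : ℤ) = (a:ℤ)*b - a - b := by
    push_cast [Nat.cast_sub (by omega : a + b ≤ a*b)]
    omega
  have hdvdZ2 : (a:ℤ) ∣ ((b:ℤ) * (y+1)) := by
    rw [hcast] at hdvdZ
    have e : (b:ℤ) * (y+1) = ((b:ℤ)*y - ((a:ℤ)*b - a - b)) + (a*(b-1)) := by ring
    rw [e]
    exact dvd_add hdvdZ ⟨b-1, by ring⟩
  have hdvd : a ∣ b * (y + 1) := by exact_mod_cast hdvdZ2
  have hdvd2 : a ∣ y + 1 := hcop.dvd_of_dvd_mul_left hdvd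
  have hy1 : y + 1 = a := by
    have := Nat.le_of_dvd (by omega) hdvd2
    omega
  have hba : b * y + b = a * b := by
    have e : b * (y+1) = b * y + b := by ring
    have : b * (y+1) = b * a := by rw [hy1]
    rw [mul_comm b a] at this
    omega
  omega

lemma big_mem {m : ℕ} (hm : a * b - a - b < m) : m ∈ NS a b := by
  obtain ⟨y, hy, hmod⟩ := exists_res ha hcop m
  rw [mem_NS_iff (by omega : 0 < a)]
  refine ⟨y, hy, ?_, hmod⟩
  by_contra hlt
  push_neg at hlt
  obtain ⟨k, hk⟩ := (Nat.modEq_iff_dvd' (le_of_lt hlt)).mp hmod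
  have hk1 : 1 ≤ k := by
    rcases Nat.eq_zero_or_pos k with rfl | h; · omega
    · exact h
  have hya : b * y ≤ b * (a - 1) := Nat.mul_le_mul_left b (by omega)
  have hba : b * (a-1) + b = a * b := by
    have e1 : b * (a - 1 + 1) = b * (a-1) + b := by ring
    have e2 : a - 1 + 1 = a := by omega
    rw [e2] at e1
    rw [mul_comm a b]
    omega
  have hak : a ≤ a * k := Nat.le_mul_of_pos_right a hk1
  have hab2 : a + b ≤ a * b := by nlinarith
  omega

end frob

section sym
variable {a b : ℕ} (ha : 2 ≤ a) (hab : a < b) (hcop : Nat.Coprime a b)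
include ha hab hcop

lemma sym_mem {m n : ℕ} (hmn : m + n = a * b - a - b) (hm : m ∉ NS a b) :
    n ∈ NS a b := by
  obtain ⟨y, hy, hmod⟩ := exists_res ha hcop m
  have hlt : m < b * y := by
    by_contra hle
    exact hm ((mem_NS_iff (by omega)).mpr ⟨y, hy, by omega, hmod⟩)
  have hab2 : a + b ≤ a * b := by nlinarith
  set y' := a - 1 - y with hy'def
  have hy'lt : y' < a := by omega
  -- n ≡ b * y' [MOD a]
  have key : n + b * (y + 1) ≡ b * y' + b * (y + 1) [MOD a] := by
    have h1 : n + b * (y + 1) ≡ n + b + m [MOD a] := by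
      have : n + b * (y+1) = (n + b) + b * y := by ring
      rw [this]
      exact hmod.symm.add_left _
    have e1 : n + b + m = a * b - a := by omega
    rw [e1] at h1
    have h2 : a * b - a ≡ 0 [MOD a] := Nat.modEq_zero_iff_dvd.mpr
      ⟨b - 1, by rw [Nat.mul_sub, mul_one]⟩
    have h3 : b * y' + b * (y + 1) = b * a := by
      have : y' + (y+1) = a := by omega
      calc b * y' + b * (y+1) = b * (y' + (y+1)) := by ring
        _ = b * a := by rw [this]
    have h4 : b * y' + b * (y + 1) ≡ 0 [MOD a] := by
      rw [h3, mul_comm]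
      exact Nat.modEq_zero_iff_dvd.mpr ⟨b, rfl⟩
    exact (h1.trans h2).trans h4.symm
  have hmod' : n ≡ b * y' [MOD a] := key.add_right_cancel' _
  rw [mem_NS_iff (by omega : 0 < a)]
  refine ⟨y', hy'lt, ?_, hmod'⟩
  -- b * y' ≤ n
  by_contra hlt'
  push_neg at hlt'
  obtain ⟨k, hk⟩ := (Nat.modEq_iff_dvd' (le_of_lt hlt')).mp hmod'
  have hk1 : 1 ≤ k := by
    rcases Nat.eq_zero_or_pos k with rfl | h; · omega
    · exact h
  have hak : a ≤ a * k := Nat.le_mul_of_pos_right a hk1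
  -- b*y' + b*(y+1) = b*a  and b*y > m
  have h3 : b * y' + b * (y + 1) = a * b := by
    have e : y' + (y+1) = a := by omega
    calc b * y' + b * (y+1) = b * (y' + (y+1)) := by ring
      _ = b * a := by rw [e]
      _ = a * b := mul_comm ..
  have e2 : b * (y+1) = b * y + b := by ring
  omega

end sym

lemma NS_add {a b : ℕ} {m n : ℕ} (hm : m ∈ NS a b) (hn : n ∈ NS a b) :
    m + n ∈ NS a b := by
  obtain ⟨x, y, rfl⟩ := hm
  obtain ⟨x', y', rfl⟩ := hn
  exact ⟨x + x', y + y', by ring⟩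

lemma genus_NS {a b g : ℕ} (ha : 2 ≤ a) (hab : a < b) (hcop : Nat.Coprime a b)
    (hg2 : 2 * g = (a - 1) * (b - 1)) : (NS a b)ᶜ.ncard = g := by
  classical
  have hab2 : a + b ≤ a * b := by nlinarith
  have hexp : (a - 1) * (b - 1) + a + b = a * b + 1 := by
    zify [show 1 ≤ a by omega, show 1 ≤ b by omega]
    ring
  set F := a * b - a - b with hF
  have hF1 : F + 1 = 2 * g := by omega
  set A := (range (F+1)).filter (fun m => m ∉ NS a b) with hA
  set B := (range (F+1)).filter (fun m => m ∈ NS a b) with hB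
  have hcompl : (NS a b)ᶜ = ↑A := by
    ext m
    simp only [hA, Set.mem_compl_iff, coe_filter, mem_range, Set.mem_setOf_eq]
    constructor
    · intro hm
      refine ⟨?_, hm⟩
      by_contra hlt
      exact hm (big_mem ha hab hcop (by omega))
    · tauto
  have hcard : (NS a b)ᶜ.ncard = A.card := by rw [hcompl, Set.ncard_coe_finset]
  have hAB : A.card = B.card := by
    refine Finset.card_bij (fun m _ => F - m) ?_ ?_ ?_
    · intro m hm
      simp only [hA, mem_filter, mem_range] at hm
      simp only [hB, mem_filter, mem_range]
      exact ⟨by omega, sym_mem ha hab hcop (by omega) hm.2⟩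
    · intro m hm m' hm' h
      have h' : F - m = F - m' := h
      simp only [hA, mem_filter, mem_range] at hm hm'
      omega
    · intro n hn
      simp only [hB, mem_filter, mem_range] at hn
      refine ⟨F - n, ?_, show F - (F - n) = n by omega⟩
      simp only [hA, mem_filter, mem_range]
      refine ⟨by omega, fun hFn => ?_⟩
      have := NS_add hFn hn.2
      rw [show F - n + n = F by omega] at this
      exact F_notin ha hab hcop this
  have hsum : B.card + A.card = F + 1 := by
    rw [hA, hB]
    rw [Finset.card_filter_add_card_filter_not]
    · exact card_range _
  omega

lemma count_NS {a b c g : ℕ} (ha : 2 ≤ a) (hab : a < b) (hcop : Nat.Coprime a b)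
    (hc : a = 2 * c) (hg2 : 2 * g + a + b = a * b + 1) :
    (NS a b ∩ Set.Icc 1 g).ncard + 1 = ∑ y ∈ range c, ((g - b * y) / a + 1) := by
  classical
  have hc1 : 1 ≤ c := by omega
  have hab2 : a * b = 2 * (b * c) := by rw [hc]; ring
  have hgbc : g < b * c := by omega
  have hbc' : b * (c - 1) ≤ g := by
    have e : b * (c - 1) + b = b * c := by
      have e2 : b * (c - 1 + 1) = b * (c-1) + b := by ring
      rw [show c - 1 + 1 = c by omega] at e2
      omega
    omega
  set T1 := (Finset.Icc 1 g).filter (fun m => m ∈ NS a b) with hT1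
  set T0 := (Finset.Icc 0 g).filter (fun m => m ∈ NS a b) with hT0
  have h1 : NS a b ∩ Set.Icc 1 g = ↑T1 := by
    ext m
    simp only [hT1, Set.mem_inter_iff, Set.mem_Icc, coe_filter, Finset.mem_Icc,
      Set.mem_setOf_eq]
    tauto
  have h2 : (NS a b ∩ Set.Icc 1 g).ncard = T1.card := by rw [h1, Set.ncard_coe_finset]
  have h0T : T0 = insert 0 T1 := by
    ext m
    simp only [hT0, hT1, mem_filter, Finset.mem_Icc, mem_insert]
    constructor
    · rintro ⟨⟨-, h⟩, hm⟩
      rcases Nat.eq_zero_or_pos m with rfl | hp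
      · exact Or.inl rfl
      · exact Or.inr ⟨⟨hp, h⟩, hm⟩
    · rintro (rfl | ⟨⟨h1', h⟩, hm⟩)
      · exact ⟨⟨Nat.zero_le _, Nat.zero_le _⟩, ⟨0, 0, by ring⟩⟩
      · exact ⟨⟨Nat.zero_le _, h⟩, hm⟩
  have h0card : T0.card = T1.card + 1 := by
    rw [h0T, card_insert_of_notMem]
    simp [hT1]
  set P := ((range (g+1)) ×ˢ (range a)).filter (fun p => a * p.1 + b * p.2 ≤ g) with hP
  have himg : T0 = P.image (fun p => a * p.1 + b * p.2) := by
    ext m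
    simp only [hT0, hP, mem_filter, Finset.mem_Icc, mem_image, mem_product, mem_range]
    constructor
    · rintro ⟨⟨-, hmg⟩, hm⟩
      rw [mem_NS_iff (by omega : 0 < a)] at hm
      obtain ⟨y, hy, hle, hmod⟩ := hm
      obtain ⟨k, hk⟩ := (Nat.modEq_iff_dvd' hle).mp hmod.symm
      have hak : k ≤ a * k := Nat.le_mul_of_pos_left k (show 0 < a by omega)
      have hkg : k < g + 1 := by omega
      refine ⟨(k, y), ⟨⟨show k < g + 1 from hkg, show y < a from hy⟩,
        show a * k + b * y ≤ g by omega⟩, show a * k + b * y = m by omega⟩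
    · rintro ⟨⟨x, y⟩, ⟨⟨-, -⟩, hle⟩, rfl⟩
      exact ⟨⟨Nat.zero_le _, hle⟩, ⟨x, y, rfl⟩⟩
  have hinj : Set.InjOn (fun p : ℕ × ℕ => a * p.1 + b * p.2) ↑P := by
    rintro ⟨x, y⟩ hp ⟨x', y'⟩ hp' h
    simp only [hP, coe_filter, mem_product, mem_range, Set.mem_setOf_eq] at hp hp'
    have h' : a * x + b * y = a * x' + b * y' := h
    have e1 : a * x + b * y ≡ 0 + b * y [MOD a] :=
      (Nat.modEq_zero_iff_dvd.mpr ⟨x, rfl⟩).add_right (b*y)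
    have e1' : a * x' + b * y' ≡ 0 + b * y' [MOD a] :=
      (Nat.modEq_zero_iff_dvd.mpr ⟨x', rfl⟩).add_right (b*y')
    have hyy : y = y' := by
      refine res_uniq hcop hp.1.2 hp'.1.2 ?_
      have := (e1.symm.trans (h' ▸ e1'))
      simpa using this
    subst hyy
    have hxx : x = x' := by
      have : a * x = a * x' := by omega
      exact Nat.eq_of_mul_eq_mul_left (by omega) this
    simp [hxx]
  have hPcard : T0.card = P.card := by
    rw [himg, Finset.card_image_of_injOn hinj]
  have hfib : P.card = ∑ y ∈ range a, ((P.filter (fun p => p.2 = y)).card) := by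
    refine card_eq_sum_card_fiberwise (fun p hp => ?_)
    change p ∈ P at hp
    simp only [hP, mem_filter, mem_product, mem_range] at hp
    exact mem_range.mpr hp.1.2
  have hfibcard : ∀ y < a, (P.filter (fun p => p.2 = y)).card
      = if b * y ≤ g then (g - b * y) / a + 1 else 0 := by
    intro y hy
    split_ifs with hby
    · have : P.filter (fun p => p.2 = y)
          = (range ((g - b * y) / a + 1)).image (fun x => (x, y)) := by
        ext ⟨x, y'⟩
        simp only [hP, mem_filter, mem_product, mem_range, mem_image]
        constructor
        · rintro ⟨⟨⟨hx, -⟩, hle⟩, rfl⟩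
          refine ⟨x, ?_, rfl⟩
          rw [Nat.lt_succ_iff, Nat.le_div_iff_mul_le (by omega : 0 < a)]
          have e : x * a = a * x := mul_comm ..
          have hxa : x ≤ x * a := Nat.le_mul_of_pos_right x (show 0 < a by omega)
          omega
        · rintro ⟨x', hx', h⟩
          injection h with e1 e2
          subst e1; subst e2
          rw [Nat.lt_succ_iff, Nat.le_div_iff_mul_le (by omega : 0 < a)] at hx'
          have e : x' * a = a * x' := mul_comm ..
          have hxa : x' ≤ x' * a := Nat.le_mul_of_pos_right x' (show 0 < a by omega)
          refine ⟨⟨⟨by omega, hy⟩, by omega⟩, rfl⟩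
      rw [this, Finset.card_image_of_injective _ (fun u v huv => by simpa using huv),
        card_range]
    · have : P.filter (fun p => p.2 = y) = ∅ := by
        ext ⟨x, y'⟩
        simp only [hP, mem_filter, mem_product, mem_range, notMem_empty, iff_false]
        rintro ⟨⟨⟨-, -⟩, hle⟩, rfl⟩
        omega
      simp [this]
  have hsplit : ∑ y ∈ range a, ((P.filter (fun p => p.2 = y)).card)
      = ∑ y ∈ range c, ((g - b * y) / a + 1) := by
    rw [range_eq_Ico, ← Finset.sum_Ico_consecutive _ (Nat.zero_le c) (by omega : c ≤ a)]
    have hz : ∑ y ∈ Finset.Ico c a, ((P.filter (fun p => p.2 = y)).card) = 0 := by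
      refine Finset.sum_eq_zero fun y hyi => ?_
      rw [Finset.mem_Ico] at hyi
      rw [hfibcard y hyi.2, if_neg]
      have : b * c ≤ b * y := Nat.mul_le_mul_left b hyi.1
      omega
    rw [hz, add_zero]
    refine Finset.sum_congr (by rw [range_eq_Ico]) fun y hyi => ?_
    rw [Finset.mem_range] at hyi
    have hylt : y < a := by omega
    have hbyg : b * y ≤ g := by
      have h3 : b * y ≤ b * (c-1) := Nat.mul_le_mul_left b (by omega)
      omega
    rw [hfibcard y hylt, if_pos hbyg]
  rw [h2, h0card.symm, hPcard, hfib, hsplit]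

lemma tri_le_sum (s : Finset ℕ) : s.card * (s.card - 1) ≤ 2 * ∑ x ∈ s, x := by
  induction s using Finset.strongInduction with
  | _ s ih =>
    rcases s.eq_empty_or_nonempty with rfl | hne
    · simp
    · set M := s.max' hne with hM
      have hmem := s.max'_mem hne
      have h1 : s.card ≤ M + 1 := by
        have hsub : s ⊆ range (M + 1) :=
          fun x hx => mem_range.mpr (Nat.lt_succ_of_le (s.le_max' x hx))
        simpa using card_le_card hsub
      have ihe := ih (s.erase M) (erase_ssubset hmem)
      have hcard : (s.erase M).card = s.card - 1 := card_erase_of_mem hmem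
      have hsum : ∑ x ∈ s, x = M + ∑ x ∈ s.erase M, x := (add_sum_erase s id hmem).symm
      rw [hcard] at ihe
      rw [Nat.sub_sub] at ihe
      norm_num at ihe
      have hpos : 1 ≤ s.card := card_pos.mpr hne
      set n := s.card
      set T := ∑ x ∈ s.erase M, x
      -- n*(n-1) ≤ 2*(M+T) given (n-1)*(n-2) ≤ 2*T, n ≤ M+1, 1 ≤ n
      rcases Nat.lt_or_ge n 2 with h | h
      · interval_cases n <;> simp_all
      · have e1 : n * (n-1) = (n-1)*(n-2) + 2*(n-1) := by
          zify [show 1 ≤ n by omega, show 2 ≤ n by omega]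
          ring
        omega

section sums
variable {a b c g : ℕ} (ha : 2 ≤ a) (hab : a < b) (hcop : Nat.Coprime a b)
    (hc : a = 2 * c) (hg2 : 2 * g + a + b = a * b + 1)

include ha hab hcop hc hg2

lemma res_inj : ∀ y ∈ range c, ∀ y' ∈ range c,
    (g - b * y) % a = (g - b * y') % a → y = y' := by
  intro y hy y' hy' h
  rw [mem_range] at hy hy'
  have hc1 : 1 ≤ c := by omega
  have hab2 : a * b = 2 * (b * c) := by rw [hc]; ring
  have hbyg : ∀ z, z < c → b * z ≤ g := by
    intro z hz
    have e : b * (c - 1) + b = b * c := by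
      have e2 : b * (c - 1 + 1) = b * (c-1) + b := by ring
      rw [show c - 1 + 1 = c by omega] at e2
      omega
    have h3 : b * z ≤ b * (c-1) := Nat.mul_le_mul_left b (by omega)
    omega
  have h1 : (g - b * y) ≡ (g - b * y') [MOD a] := h
  have h2 : (g - b * y) + (b * y + b * y') ≡ (g - b * y') + (b * y + b * y') [MOD a] :=
    h1.add_right _
  have e1 : (g - b * y) + (b * y + b * y') = g + b * y' := by
    have := hbyg y hy; omega
  have e2 : (g - b * y') + (b * y + b * y') = g + b * y := by
    have := hbyg y' hy'; omega
  rw [e1, e2] at h2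
  have h3 : b * y' ≡ b * y [MOD a] := h2.add_left_cancel' g
  exact (res_uniq hcop (by omega) (by omega) h3).symm

lemma sum_decomp :
    a * (∑ y ∈ range c, (g - b * y) / a) + (∑ y ∈ range c, (g - b * y) % a)
      + b * (∑ y ∈ range c, y) = c * g := by
  have hc1 : 1 ≤ c := by omega
  have hab2 : a * b = 2 * (b * c) := by rw [hc]; ring
  have hbyg : ∀ z, z < c → b * z ≤ g := by
    intro z hz
    have e : b * (c - 1) + b = b * c := by
      have e2 : b * (c - 1 + 1) = b * (c-1) + b := by ring
      rw [show c - 1 + 1 = c by omega] at e2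
      omega
    have h3 : b * z ≤ b * (c-1) := Nat.mul_le_mul_left b (by omega)
    omega
  rw [Finset.mul_sum, Finset.mul_sum, ← Finset.sum_add_distrib, ← Finset.sum_add_distrib]
  have hcg : c * g = ∑ _y ∈ range c, g := by
    simp [Finset.sum_const, mul_comm]
  rw [hcg]
  refine Finset.sum_congr rfl fun y hy => ?_
  rw [mem_range] at hy
  have h1 := Nat.div_add_mod (g - b * y) a
  have h2 := hbyg y hy
  omega

lemma R_low : c * (c - 1) ≤ 2 * ∑ y ∈ range c, (g - b * y) % a := by
  have hinj := res_inj ha hab hcop hc hg2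
  have hcard : ((range c).image (fun y => (g - b * y) % a)).card = c := by
    rw [Finset.card_image_of_injOn hinj, card_range]
  have hsum : ∑ x ∈ (range c).image (fun y => (g - b * y) % a), x
      = ∑ y ∈ range c, (g - b * y) % a := Finset.sum_image hinj
  have := tri_le_sum ((range c).image (fun y => (g - b * y) % a))
  rw [hcard, hsum] at this
  exact this

lemma R_high : 2 * (∑ y ∈ range c, (g - b * y) % a) + c * (c - 1) ≤ 2 * (c * (a - 1)) := by
  have hmodlt : ∀ y, (g - b * y) % a < a := fun y => Nat.mod_lt _ (by omega)
  have hinj := res_inj ha hab hcop hc hg2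
  have hinj' : ∀ y ∈ range c, ∀ y' ∈ range c,
      (a - 1) - (g - b * y) % a = (a - 1) - (g - b * y') % a → y = y' := by
    intro y hy y' hy' h
    refine hinj y hy y' hy' ?_
    have h1 := hmodlt y
    have h2 := hmodlt y'
    omega
  have hcard : ((range c).image (fun y => (a - 1) - (g - b * y) % a)).card = c := by
    rw [Finset.card_image_of_injOn hinj', card_range]
  have hsum : ∑ x ∈ (range c).image (fun y => (a - 1) - (g - b * y) % a), x
      = ∑ y ∈ range c, ((a - 1) - (g - b * y) % a) := Finset.sum_image hinj'
  have htri := tri_le_sum ((range c).image (fun y => (a - 1) - (g - b * y) % a))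
  rw [hcard, hsum] at htri
  have hsplit : (∑ y ∈ range c, ((a - 1) - (g - b * y) % a))
      + (∑ y ∈ range c, (g - b * y) % a) = c * (a - 1) := by
    rw [← Finset.sum_add_distrib]
    have hcg : c * (a - 1) = ∑ _y ∈ range c, (a - 1) := by
      simp [Finset.sum_const, mul_comm]
    rw [hcg]
    refine Finset.sum_congr rfl fun y hy => ?_
    have := hmodlt y
    omega
  omega

end sums

end NSaux

open Finset in
theorem stmt_13 (a b : ℕ) (ha : 2 ≤ a) (hab : a < b) (hcop : Nat.Coprime a b)
    (heven : Even a)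
    (S : Set ℕ) (hS : S = {m | ∃ x y : ℕ, a * x + b * y = m}) :
    0 ≤ (ordNum S : ℚ) - ((a : ℚ) * b - a - 4) / 8 ∧
      (ordNum S : ℚ) - ((a : ℚ) * b - a - 4) / 8 ≤ (a : ℚ) / 4 := by
  obtain ⟨c, hc⟩ := heven
  have hc2 : a = 2 * c := by omega
  have hc1 : 1 ≤ c := by omega
  have hbodd : b % 2 = 1 := by
    rcases Nat.even_or_odd b with hbe | hbo
    · exfalso
      have h2 : (2 : ℕ) ∣ Nat.gcd a b := Nat.dvd_gcd ⟨c, hc2⟩ hbe.two_dvd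
      rw [hcop] at h2
      omega
    · obtain ⟨k, hk⟩ := hbo
      omega
  have hab2 : a + b ≤ a * b := by nlinarith
  have hexp : (a - 1) * (b - 1) + a + b = a * b + 1 := by
    zify [show 1 ≤ a by omega, show 1 ≤ b by omega]
    ring
  set g := (a - 1) * (b - 1) / 2 with hgdef
  have hdvd : 2 ∣ (a - 1) * (b - 1) := Dvd.dvd.mul_left (by omega : 2 ∣ (b - 1)) _
  have hg2 : 2 * g = (a - 1) * (b - 1) := Nat.mul_div_cancel' hdvd
  have hg2' : 2 * g + a + b = a * b + 1 := by omega
  have hSNS : S = NS a b := hS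
  subst hSNS
  have hgen : genus (NS a b) = g := genus_NS ha hab hcop hg2
  have hordeq : ordNum (NS a b) = (NS a b ∩ Set.Icc 1 g).ncard := by
    unfold ordNum
    rw [hgen]
  set r := ordNum (NS a b) with hr
  set Q := ∑ y ∈ range c, (g - b * y) / a with hQ
  set R := ∑ y ∈ range c, (g - b * y) % a with hR
  set E := ∑ y ∈ range c, y with hE
  have f1 : r + 1 = Q + c := by
    rw [hordeq, count_NS ha hab hcop hc2 hg2', Finset.sum_add_distrib]
    simp [hQ]
  have f2 : a * Q + R + b * E = c * g := sum_decomp ha hab hcop hc2 hg2'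
  have f3 : 2 * E = c * (c - 1) := by
    rw [hE, ← Finset.sum_range_id_mul_two c, mul_comm]
  have f5 : c * (c - 1) ≤ 2 * R := R_low ha hab hcop hc2 hg2'
  have f6 : 2 * R + c * (c - 1) ≤ 2 * (c * (a - 1)) := R_high ha hab hcop hc2 hg2'
  -- cast to ℚ
  have q1 : (r : ℚ) + 1 = Q + c := by exact_mod_cast f1
  have q2 : (a : ℚ) * Q + R + b * E = c * g := by exact_mod_cast f2
  have q3 : 2 * (E : ℚ) = c * (c - 1) := by
    have := f3
    zify [hc1] at this
    exact_mod_cast this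
  have q4 : 2 * (g : ℚ) + a + b = a * b + 1 := by exact_mod_cast hg2'
  have q5 : (c : ℚ) * (c - 1) ≤ 2 * R := by
    have := f5
    zify [hc1] at this
    exact_mod_cast this
  have q6 : 2 * (R : ℚ) + c * (c - 1) ≤ 2 * (c * (a - 1)) := by
    have := f6
    zify [hc1, show 1 ≤ a by omega] at this
    exact_mod_cast this
  have q7 : (a : ℚ) = 2 * c := by exact_mod_cast hc2
  rw [q7] at q2 q4 q6 ⊢
  have hcq : (0 : ℚ) < c := by exact_mod_cast hc1
  have hkey : (c : ℚ) * (8 * r) = 2 * b * c ^ 2 + 4 * c ^ 2 + 2 * c - 4 * R - 8 * c := by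
    linear_combination (8 * c) * q1 + 4 * q2 - 2 * b * q3 + (2 * c) * q4
  have f6' : 2 * (R : ℚ) ≤ 3 * c ^ 2 - c := by nlinarith [q6]
  have f5' : (c : ℚ) ^ 2 - c ≤ 2 * R := by nlinarith [q5]
  have h1 : (2 : ℚ) * c * b - 2 * c - 4 ≤ 8 * r := by
    have he : (c : ℚ) * (8 * r) - c * (2 * c * b - 2 * c - 4)
        = 6 * c ^ 2 - 2 * c - 4 * R := by linear_combination hkey
    have hm : (c : ℚ) * (2 * c * b - 2 * c - 4) ≤ c * (8 * r) := by linarith [f6']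
    exact le_of_mul_le_mul_left hm hcq
  have h2 : (8 : ℚ) * r ≤ 2 * c * b + 2 * c - 4 := by
    have he : (c : ℚ) * (2 * c * b + 2 * c - 4) - c * (8 * r)
        = 4 * R - 2 * c ^ 2 + 2 * c := by linear_combination -hkey
    have hm : (c : ℚ) * (8 * r) ≤ c * (2 * c * b + 2 * c - 4) := by linarith [f5']
    exact le_of_mul_le_mul_left hm hcq
  constructor <;> [linarith; linarith]
end

section
/- Let a ≥ 2 be a fixed integer, and let p = a if a is odd and p = 2a if a is even. There exist rational numbers α_0, ..., α_{p−1} and β_0, ..., β_{p−1} such that for every integer b > a with gcd(a, b) = 1, r(⟨a, b⟩) = α_{b mod p}·b + β_{b mod p}. In other words, r(⟨a, b⟩) is given by a linear quasipolynomial in b whose period divides a when a is odd and divides 2a when a is even. -/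
namespace Stmt14Aux

/-- Representative value of `g mod a` depending only on the residue class. -/
def Gfun (a c : ℕ) : ℤ :=
  if Odd a then ((a:ℤ)-1)/2 * ((c:ℤ)-1) else ((a:ℤ)-1) * (((c:ℤ)-1)/2)

def SS (a b : ℕ) : Set ℕ := {m | ∃ x y : ℕ, a * x + b * y = m}

variable {a b : ℕ}

lemma mem_SS_iff (ha : 0 < a) {m : ℕ} :
    m ∈ SS a b ↔ ∃ y < a, ∃ x, a * x + b * y = m := by
  constructor
  · rintro ⟨x, y, rfl⟩
    refine ⟨y % a, Nat.mod_lt _ ha, x + b * (y / a), ?_⟩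
    conv_rhs => rw [← Nat.div_add_mod y a]
    ring
  · rintro ⟨y, _, x, h⟩; exact ⟨x, y, h⟩

lemma SS_uniq (ha : 0 < a) (hab : Nat.Coprime a b) {x1 y1 x2 y2 : ℕ}
    (h1 : y1 < a) (h2 : y2 < a)
    (he : a * x1 + b * y1 = a * x2 + b * y2) : x1 = x2 ∧ y1 = y2 := by
  have hmod : (a * x1 + b * y1) % a = (a * x2 + b * y2) % a := by rw [he]
  rw [Nat.mul_add_mod, Nat.mul_add_mod] at hmod
  have hy : y1 = y2 := by
    have := Nat.ModEq.cancel_left_of_coprime (c := b) (m := a)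
      (by simpa [Nat.coprime_comm] using hab) (a := y1) (b := y2) hmod
    rw [Nat.ModEq, Nat.mod_eq_of_lt h1, Nat.mod_eq_of_lt h2] at this
    exact this
  subst hy
  refine ⟨Nat.eq_of_mul_eq_mul_left ha ?_, rfl⟩
  omega

lemma exists_y (ha : 2 ≤ a) (hab : Nat.Coprime a b) (m : ℕ) :
    ∃ y < a, b * y ≡ m [MOD a] := by
  haveI : NeZero a := ⟨by omega⟩
  obtain ⟨u, hu⟩ : IsUnit (b : ZMod a) := (ZMod.isUnit_iff_coprime b a).2 hab.symm
  refine ⟨((u⁻¹ : (ZMod a)ˣ) * (m : ZMod a) : ZMod a).val, ZMod.val_lt _, ?_⟩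
  have : ((b * ((u⁻¹ : (ZMod a)ˣ) * (m : ZMod a) : ZMod a).val : ℕ) : ZMod a)
      = (m : ZMod a) := by
    push_cast
    rw [ZMod.natCast_val, ZMod.cast_id, ← hu, ← mul_assoc, Units.mul_inv, one_mul]
  exact (ZMod.natCast_eq_natCast_iff _ _ _).1 this

lemma mem_of_big (ha : 2 ≤ a) (hab : Nat.Coprime a b) {m : ℕ}
    (hm : b * (a - 1) ≤ m) : m ∈ SS a b := by
  obtain ⟨y, hy, hmod⟩ := exists_y ha hab m
  have hby : b * y ≤ m := le_trans (Nat.mul_le_mul_left _ (by omega)) hm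
  obtain ⟨x, hx⟩ : a ∣ m - b * y := (Nat.modEq_iff_dvd' hby).1 hmod
  exact ⟨x, y, by omega⟩

lemma count_eq (ha : 2 ≤ a) (hab : Nat.Coprime a b) (t : ℕ) :
    (SS a b ∩ Set.Icc 0 t).ncard
      = ∑ y ∈ Finset.range a, (if b * y ≤ t then (t - b * y) / a + 1 else 0) := by
  classical
  have ha0 : 0 < a := by omega
  set g : ℕ → Finset ℕ := fun y =>
    if b * y ≤ t then (Finset.range ((t - b*y)/a + 1)).image (fun x => a*x + b*y)
    else ∅ with hgdef
  have hmemg : ∀ y m, m ∈ g y ↔ b * y ≤ t ∧ ∃ x ≤ (t - b*y)/a, a*x + b*y = m := by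
    intro y m
    simp only [hgdef]
    split_ifs with h
    · simp only [Finset.mem_image, Finset.mem_range, Nat.lt_succ_iff]
      tauto
    · simp [h]
  have hset : SS a b ∩ Set.Icc 0 t = ↑((Finset.range a).biUnion g) := by
    ext m
    simp only [Set.mem_inter_iff, Set.mem_Icc, Finset.coe_biUnion, Set.mem_iUnion,
      Finset.mem_coe, Finset.mem_range]
    constructor
    · rintro ⟨hmS, -, hmt⟩
      obtain ⟨y, hy, x, hx⟩ := (mem_SS_iff ha0).1 hmS
      refine ⟨y, hy, (hmemg y m).2 ⟨by omega, x, ?_, hx⟩⟩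
      rw [Nat.le_div_iff_mul_le ha0, Nat.mul_comm]
      omega
    · rintro ⟨y, hy, hm⟩
      obtain ⟨hby, x, hx, hxm⟩ := (hmemg y m).1 hm
      have : a * x ≤ t - b*y := by
        calc a * x ≤ a * ((t - b*y)/a) := Nat.mul_le_mul_left _ hx
        _ ≤ t - b*y := Nat.mul_div_le _ _
      exact ⟨⟨x, y, hxm⟩, Nat.zero_le _, by omega⟩
  rw [hset, Set.ncard_coe_finset]
  rw [Finset.card_biUnion]
  · refine Finset.sum_congr rfl fun y hy => ?_
    simp only [hgdef]
    split_ifs with h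
    · rw [Finset.card_image_of_injective, Finset.card_range]
      intro x1 x2 hx
      have hx' : a * x1 + b * y = a * x2 + b * y := hx
      have : a * x1 = a * x2 := by omega
      exact Nat.eq_of_mul_eq_mul_left ha0 this
    · simp
  · intro y1 hy1 y2 hy2 hne
    simp only [Finset.mem_coe, Finset.mem_range] at hy1 hy2
    rw [Function.onFun, Finset.disjoint_left]
    intro m hm1 hm2
    obtain ⟨-, x1, -, hx1⟩ := (hmemg y1 m).1 hm1
    obtain ⟨-, x2, -, hx2⟩ := (hmemg y2 m).1 hm2
    have he : a * x1 + b * y1 = a * x2 + b * y2 := by omega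
    exact hne (SS_uniq ha0 hab hy1 hy2 he).2

lemma pred_div (ha : 0 < a) {n : ℕ} (h : ¬ a ∣ n) : (n-1)/a = n/a := by
  obtain ⟨q, r, hr, rfl⟩ : ∃ q r, r < a ∧ n = a * q + r :=
    ⟨n / a, n % a, Nat.mod_lt _ ha, (Nat.div_add_mod n a).symm⟩
  have hr0 : r ≠ 0 := by rintro rfl; exact h ⟨q, by ring⟩
  have h1 : a * q + r - 1 = a * q + (r - 1) := by omega
  rw [h1, Nat.mul_add_div ha, Nat.mul_add_div ha,
    Nat.div_eq_of_lt (by omega), Nat.div_eq_of_lt hr]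

lemma not_dvd_mul (hab : Nat.Coprime a b) {z : ℕ} (h1 : 0 < z) (h2 : z < a) :
    ¬ a ∣ b * z := by
  intro h
  have : a ∣ z := (Nat.Coprime.dvd_of_dvd_mul_left hab) h
  have := Nat.le_of_dvd h1 this
  omega

lemma div_pair (ha : 2 ≤ a) (hab : Nat.Coprime a b) {z : ℕ}
    (h1 : 1 ≤ z) (h2 : z < a) :
    (b*z)/a + (b*(a-z))/a = b - 1 := by
  have ha0 : 0 < a := by omega
  have hd1 := Nat.div_add_mod (b*z) a
  have hd2 := Nat.div_add_mod (b*(a-z)) a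
  have hm1 : b*z % a ≠ 0 := fun h =>
    not_dvd_mul hab (by omega) h2 (Nat.dvd_of_mod_eq_zero h)
  have hm2 : b*(a-z) % a ≠ 0 := fun h =>
    not_dvd_mul hab (by omega) (by omega) (Nat.dvd_of_mod_eq_zero h)
  have hsum : b*z + b*(a-z) = a*b := by
    rw [← Nat.mul_add, Nat.add_sub_cancel' (le_of_lt h2)]; ring
  have hma : b*z % a + b*(a-z) % a = a := by
    have hdvd : a ∣ (b*z % a + b*(a-z) % a) := by
      have h0 : (b*z % a + b*(a-z) % a) % a = 0 := by
        rw [← Nat.add_mod, hsum, Nat.mul_mod_right]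
      exact Nat.dvd_of_mod_eq_zero h0
    obtain ⟨k, hk⟩ := hdvd
    have hlt1 : b*z % a < a := Nat.mod_lt _ ha0
    have hlt2 : b*(a-z) % a < a := Nat.mod_lt _ ha0
    have hk2 : k < 2 := by
      by_contra hc
      push_neg at hc
      have : a * 2 ≤ a * k := Nat.mul_le_mul_left _ hc
      omega
    have hk0 : k ≠ 0 := by rintro rfl; omega
    interval_cases k <;> omega
  have key : a * ((b*z)/a + (b*(a-z))/a + 1) = a * b := by
    rw [Nat.mul_add, Nat.mul_add, Nat.mul_one]
    omega
  exact Nat.eq_sub_of_add_eq (Nat.eq_of_mul_eq_mul_left ha0 key)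

lemma sum_reflect (ha : 2 ≤ a) (hb : a < b) (hab : Nat.Coprime a b) :
    ∑ z ∈ Finset.Ico 1 a, (b*z)/a = (a-1)*(b-1)/2 := by
  have hrefl : ∑ z ∈ Finset.Ico 1 a, (b*(a-z))/a = ∑ z ∈ Finset.Ico 1 a, (b*z)/a := by
    refine Finset.sum_nbij' (i := fun z => a - z) (j := fun z => a - z) ?_ ?_ ?_ ?_ ?_ <;>
      simp only [Finset.mem_Ico] <;> intro z hz
    · omega
    · omega
    · omega
    · omega
    · simp
  have h2 : 2 * (∑ z ∈ Finset.Ico 1 a, (b*z)/a) = (a-1)*(b-1) := by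
    have := Finset.sum_add_distrib (s := Finset.Ico 1 a)
      (f := fun z => (b*z)/a) (g := fun z => (b*(a-z))/a)
    rw [hrefl] at this
    have hptwise : ∑ z ∈ Finset.Ico 1 a, ((b*z)/a + (b*(a-z))/a)
        = ∑ z ∈ Finset.Ico 1 a, (b-1) := by
      refine Finset.sum_congr rfl fun z hz => ?_
      simp only [Finset.mem_Ico] at hz
      exact div_pair ha hab hz.1 hz.2
    rw [hptwise, Finset.sum_const, Nat.card_Ico, smul_eq_mul] at this
    omega
  omega

lemma two_dvd_E (ha : 2 ≤ a) (hab : Nat.Coprime a b) : 2 ∣ (a-1)*(b-1) := by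
  rcases Nat.even_or_odd a with he | ho
  · have hbodd : ¬ 2 ∣ b := by
      intro h2b
      have := Nat.dvd_gcd (even_iff_two_dvd.mp he) h2b
      rw [hab] at this
      omega
    obtain ⟨s, hs⟩ : 2 ∣ b - 1 := by omega
    exact ⟨(a-1)*s, by rw [hs]; ring⟩
  · obtain ⟨t, ht⟩ := ho
    exact ⟨t*(b-1), by rw [ht, Nat.add_sub_cancel]; ring⟩

lemma genus_eq (ha : 2 ≤ a) (hb : a < b) (hab : Nat.Coprime a b) :
    genus (SS a b) = (a-1)*(b-1)/2 := by
  have ha0 : 0 < a := by omega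
  have hb0 : 0 < b := by omega
  -- complement is inside Iio (a*b)
  have hsub : (SS a b)ᶜ ⊆ Set.Iio (a*b) := by
    intro m hm
    by_contra hc
    simp only [Set.mem_Iio, not_lt] at hc
    have h1 : b * (a-1) ≤ b * a := Nat.mul_le_mul_left _ (by omega)
    exact hm (mem_of_big ha hab (le_trans (le_trans h1 (le_of_eq (Nat.mul_comm b a))) hc))
  have hfinC : (SS a b)ᶜ.Finite := Set.Finite.subset (Set.finite_Iio _) hsub
  have hfinS : (SS a b ∩ Set.Iio (a*b)).Finite :=
    Set.Finite.subset (Set.finite_Iio _) Set.inter_subset_right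
  have hunion : Set.Iio (a*b) = (SS a b ∩ Set.Iio (a*b)) ∪ (SS a b)ᶜ := by
    ext m
    constructor
    · intro hm
      by_cases h : m ∈ SS a b
      · exact Or.inl ⟨h, hm⟩
      · exact Or.inr h
    · rintro (⟨-, hm⟩ | hm)
      · exact hm
      · exact hsub hm
  have hcard : (Set.Iio (a*b) : Set ℕ).ncard = a*b := by
    rw [← Finset.coe_Iio, Set.ncard_coe_finset, Nat.card_Iio]
  have hdisj : Disjoint (SS a b ∩ Set.Iio (a*b)) ((SS a b)ᶜ) :=
    Set.disjoint_of_subset_left Set.inter_subset_left disjoint_compl_right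
  have hsplit : a*b = (SS a b ∩ Set.Iio (a*b)).ncard + (SS a b)ᶜ.ncard := by
    have h := Set.ncard_union_eq hdisj hfinS hfinC
    rw [← hunion, hcard] at h
    exact h
  -- compute the count
  have hIio : Set.Iio (a*b) = Set.Icc 0 (a*b - 1) := by
    ext m; simp only [Set.mem_Iio, Set.mem_Icc]
    constructor
    · intro h; exact ⟨Nat.zero_le _, by omega⟩
    · rintro ⟨-, h⟩; have : 0 < a*b := by positivity
      omega
  have hcount : (SS a b ∩ Set.Iio (a*b)).ncard
      = ∑ y ∈ Finset.range a, (if b * y ≤ a*b-1 then (a*b-1 - b * y) / a + 1 else 0) := by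
    rw [hIio]; exact count_eq ha hab _
  have hallle : ∀ y < a, b * y ≤ a*b - 1 := by
    intro y hy
    have : b * y ≤ b * (a-1) := Nat.mul_le_mul_left _ (by omega)
    have h2 : b * (a-1) + b = a * b := by
      rw [← Nat.mul_add_one]
      rw [show a - 1 + 1 = a by omega]; ring
    omega
  have hterm : ∀ y ∈ Finset.range a,
      (if b * y ≤ a*b-1 then (a*b-1 - b * y) / a + 1 else 0)
        = (a*b-1 - b*y)/a + 1 := by
    intro y hy
    simp only [Finset.mem_range] at hy
    rw [if_pos (hallle y hy)]
  have hsum2 : ∑ y ∈ Finset.range a, (if b * y ≤ a*b-1 then (a*b-1 - b * y) / a + 1 else 0)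
      = ∑ y ∈ Finset.range a, ((a*b-1 - b*y)/a + 1) :=
    Finset.sum_congr rfl hterm
  rw [hsum2] at hcount
  -- split off y = 0 and reindex
  have hrange : Finset.range a = insert 0 (Finset.Ico 1 a) := by
    ext y; simp only [Finset.mem_range, Finset.mem_insert, Finset.mem_Ico]; omega
  rw [hrange, Finset.sum_insert (by simp)] at hcount
  have hy0 : (a*b-1 - b*0)/a + 1 = b := by
    obtain ⟨k, rfl⟩ : ∃ k, b = k + 1 := ⟨b-1, by omega⟩
    have h2 : a*(k+1) = a*k + a := by ring
    have h1 : a*(k+1) - 1 - (k+1)*0 = a*k + (a-1) := by omega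
    rw [h1, Nat.mul_add_div ha0, Nat.div_eq_of_lt (by omega)]
  have hyrest : ∀ y ∈ Finset.Ico 1 a, (a*b-1 - b*y)/a + 1 = (b*(a-y))/a + 1 := by
    intro y hy
    simp only [Finset.mem_Ico] at hy
    have h1 : a*b - 1 - b*y = b*(a-y) - 1 := by
      have : b*y + b*(a-y) = a*b := by
        rw [← Nat.mul_add, Nat.add_sub_cancel' (le_of_lt hy.2)]; ring
      omega
    rw [h1, pred_div ha0 (not_dvd_mul hab (by omega) (by omega))]
  rw [Finset.sum_congr rfl hyrest] at hcount
  have hrefl : ∑ y ∈ Finset.Ico 1 a, ((b*(a-y))/a + 1)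
      = ∑ z ∈ Finset.Ico 1 a, ((b*z)/a + 1) := by
    refine Finset.sum_nbij' (i := fun z => a - z) (j := fun z => a - z) ?_ ?_ ?_ ?_ ?_ <;>
      simp only [Finset.mem_Ico] <;> intro z hz
    · omega
    · omega
    · omega
    · omega
    · simp
  rw [hrefl, Finset.sum_add_distrib, Finset.sum_const, Nat.card_Ico, smul_eq_mul,
    mul_one, sum_reflect ha hb hab] at hcount
  have hE := two_dvd_E ha hab
  have hEab : (a-1)*(b-1) + a + b = a*b + 1 := by
    obtain ⟨k, rfl⟩ : ∃ k, a = k + 1 := ⟨a-1, by omega⟩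
    obtain ⟨l, rfl⟩ : ∃ l, b = l + 1 := ⟨b-1, by omega⟩
    have h3 : (k+1)*(l+1) = k*l + k + l + 1 := by ring
    simp only [Nat.add_sub_cancel]
    omega
  unfold genus
  omega


lemma cond_iff (ha : 2 ≤ a) (hb : a < b) (hab : Nat.Coprime a b) {y : ℕ} (hy : y < a) :
    b * y ≤ (a-1)*(b-1)/2 ↔ y < a/2 := by
  have hE := two_dvd_E ha hab
  obtain ⟨k, rfl⟩ : ∃ k, a = k + 2 := ⟨a-2, by omega⟩
  obtain ⟨l, rfl⟩ : ∃ l, b = l + 3 := ⟨b-3, by omega⟩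
  have hEe : (k+2-1)*(l+3-1) = k*l + 2*k + l + 2 := by
    have e1 : k+2-1 = k+1 := by omega
    have e2 : l+3-1 = l+2 := by omega
    rw [e1, e2]; ring
  rw [hEe] at hE ⊢
  constructor
  · intro h
    by_contra hc
    push_neg at hc
    have h2y : k + 1 ≤ 2*y := by omega
    have h1 : (l+3)*(k+1) ≤ (l+3)*(2*y) := Nat.mul_le_mul_left _ h2y
    have h2 : (l+3)*(2*y) = 2*((l+3)*y) := by ring
    have h3 : (l+3)*(k+1) = k*l + l + 3*k + 3 := by ring
    omega
  · intro h
    have h2y : 2*y ≤ k := by omega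
    have h1 : (l+3)*(2*y) ≤ (l+3)*k := Nat.mul_le_mul_left _ h2y
    have h2 : (l+3)*(2*y) = 2*((l+3)*y) := by ring
    have h3 : (l+3)*k = k*l + 3*k := by ring
    omega

lemma key_mod (ha : 2 ≤ a) (hb : a < b) (hab : Nat.Coprime a b)
    {p : ℕ} (hp : p = if Odd a then a else 2 * a) (y : ℕ)
    (hby : b*y ≤ (a-1)*(b-1)/2) :
    ((((a-1)*(b-1)/2 - b*y : ℕ) : ℤ) % (a:ℤ))
      = (Gfun a (b % p) - ((b % p : ℕ):ℤ) * (y:ℤ)) % (a:ℤ) := by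
  have ha0 : 0 < a := by omega
  have hb0 : 0 < b := by omega
  set c := b % p with hc
  have hcast : (((a-1)*(b-1)/2 - b*y : ℕ) : ℤ) = (((a-1)*(b-1)/2 : ℕ) : ℤ) - (b:ℤ)*(y:ℤ) := by
    rw [Nat.cast_sub hby]; push_cast; ring
  rw [hcast]
  have hap : (a:ℤ) ∣ (p:ℤ) := by
    rw [hp]; split_ifs
    · exact dvd_rfl
    · exact ⟨2, by push_cast; ring⟩
  have hbcp : (p:ℤ) ∣ (b:ℤ) - (c:ℤ) := by
    refine ⟨((b/p : ℕ) : ℤ), ?_⟩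
    have hn : p*(b/p) + b % p = b := Nat.div_add_mod b p
    have h1 : (b:ℤ) = (p:ℤ)*((b/p : ℕ):ℤ) + (c:ℤ) := by rw [hc]; exact_mod_cast hn.symm
    linarith
  have habc : (a:ℤ) ∣ (b:ℤ) - (c:ℤ) := dvd_trans hap hbcp
  rcases Nat.even_or_odd a with heven | hodd
  · -- a even
    have hodd' : ¬ Odd a := by simp [Nat.not_odd_iff_even.2 heven]
    obtain ⟨t, ht⟩ := heven
    have hbodd : b % 2 = 1 := by
      rcases Nat.even_or_odd b with hbe | hbo
      · exfalso
        obtain ⟨s, hs⟩ := hbe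
        have h2a : 2 ∣ a := ⟨t, by omega⟩
        have h2b : 2 ∣ b := ⟨s, by omega⟩
        have := Nat.dvd_gcd h2a h2b
        rw [hab] at this
        omega
      · obtain ⟨k, hk⟩ := hbo
        omega
    have hcodd : c % 2 = 1 := by
      have h2p : 2 ∣ p := by rw [hp, if_neg hodd']; exact ⟨a, by ring⟩
      have hmm : b % p % 2 = b % 2 := Nat.mod_mod_of_dvd b h2p
      omega
    obtain ⟨s, hs⟩ : ∃ s, b = 2*s+1 := ⟨b/2, by omega⟩
    obtain ⟨u, hu⟩ : ∃ u, c = 2*u+1 := ⟨c/2, by omega⟩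
    have hg : ((a-1)*(b-1)/2 : ℕ) = (a-1)*s := by
      have h1 : (a-1)*(b-1) = 2*((a-1)*s) := by rw [hs]; rw [show 2*s+1-1 = 2*s from by omega]; ring
      rw [h1, Nat.mul_div_cancel_left _ (by norm_num)]
    have hGf : Gfun a c = ((a:ℤ)-1) * (u:ℤ) := by
      unfold Gfun
      rw [if_neg hodd', hu]
      push_cast
      rw [show (2*(u:ℤ)+1-1) = 2*u from by ring, Int.mul_ediv_cancel_left _ two_ne_zero]
    have hsu : (a:ℤ) ∣ (s:ℤ) - (u:ℤ) := by
      have h2a : (p:ℤ) = 2*(a:ℤ) := by rw [hp, if_neg hodd']; push_cast; ring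
      obtain ⟨k, hk⟩ := hbcp
      rw [h2a] at hk
      have hbs : (b:ℤ) = 2*(s:ℤ)+1 := by exact_mod_cast congrArg (Nat.cast : ℕ → ℤ) hs
      have hcu : (c:ℤ) = 2*(u:ℤ)+1 := by exact_mod_cast congrArg (Nat.cast : ℕ → ℤ) hu
      exact ⟨k, by linarith⟩
    have hd : (a:ℤ) ∣ (Gfun a c - (c:ℤ)*(y:ℤ)) - ((((a-1)*(b-1)/2 : ℕ) : ℤ) - (b:ℤ)*(y:ℤ)) := by
      have hgc : (((a-1)*(b-1)/2 : ℕ) : ℤ) = ((a:ℤ)-1)*(s:ℤ) := by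
        rw [hg]; push_cast [Nat.cast_sub (show 1 ≤ a by omega)]; ring
      have heq : (Gfun a c - (c:ℤ)*(y:ℤ)) - ((((a-1)*(b-1)/2 : ℕ) : ℤ) - (b:ℤ)*(y:ℤ))
          = ((a:ℤ)-1) * ((u:ℤ) - (s:ℤ)) + ((b:ℤ) - (c:ℤ))*(y:ℤ) := by
        rw [hGf, hgc]; ring
      rw [heq]
      have h1 : (a:ℤ) ∣ (u:ℤ) - (s:ℤ) := by
        obtain ⟨k, hk⟩ := hsu
        exact ⟨-k, by linarith⟩
      exact dvd_add (h1.mul_left _) (habc.mul_right _)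
    exact (Int.modEq_iff_dvd.2 hd)
  · -- a odd
    have hpa : p = a := by rw [hp, if_pos hodd]
    obtain ⟨t, ht⟩ := hodd
    have hg : ((a-1)*(b-1)/2 : ℕ) = t*(b-1) := by
      have h1 : (a-1)*(b-1) = 2*(t*(b-1)) := by rw [ht]; rw [show 2*t+1-1 = 2*t from by omega]; ring
      rw [h1, Nat.mul_div_cancel_left _ (by norm_num)]
    have hGf : Gfun a c = (t:ℤ) * ((c:ℤ)-1) := by
      unfold Gfun
      rw [if_pos ⟨t, ht⟩, ht]
      push_cast
      rw [show (2*(t:ℤ)+1-1) = 2*t from by ring, Int.mul_ediv_cancel_left _ two_ne_zero]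
    have hd : (a:ℤ) ∣ (Gfun a c - (c:ℤ)*(y:ℤ)) - ((((a-1)*(b-1)/2 : ℕ) : ℤ) - (b:ℤ)*(y:ℤ)) := by
      have hgc : (((a-1)*(b-1)/2 : ℕ) : ℤ) = (t:ℤ)*((b:ℤ)-1) := by
        rw [hg]; push_cast [Nat.cast_sub (show 1 ≤ b by omega)]; ring
      have heq : (Gfun a c - (c:ℤ)*(y:ℤ)) - ((((a-1)*(b-1)/2 : ℕ) : ℤ) - (b:ℤ)*(y:ℤ))
          = ((t:ℤ) - (y:ℤ)) * ((c:ℤ) - (b:ℤ)) := by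
        rw [hGf, hgc]; ring
      rw [heq]
      have h1 : (a:ℤ) ∣ (c:ℤ) - (b:ℤ) := by
        obtain ⟨k, hk⟩ := habc
        exact ⟨-k, by linarith⟩
      exact h1.mul_left _
    exact (Int.modEq_iff_dvd.2 hd)

lemma ordNum_eq (ha : 2 ≤ a) (hb : a < b) (hab : Nat.Coprime a b) :
    ordNum (SS a b) = (∑ y ∈ Finset.range (a/2), (((a-1)*(b-1)/2 - b*y)/a + 1)) - 1 := by
  classical
  have hg := genus_eq ha hb hab
  unfold ordNum
  rw [hg]
  have h0 : (0:ℕ) ∈ SS a b := ⟨0, 0, by ring⟩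
  have hins : SS a b ∩ Set.Icc 0 ((a-1)*(b-1)/2)
      = insert 0 (SS a b ∩ Set.Icc 1 ((a-1)*(b-1)/2)) := by
    ext m
    simp only [Set.mem_inter_iff, Set.mem_Icc, Set.mem_insert_iff]
    constructor
    · rintro ⟨hm, -, hle⟩
      rcases Nat.eq_zero_or_pos m with rfl | hpos
      · exact Or.inl rfl
      · exact Or.inr ⟨hm, hpos, hle⟩
    · rintro (rfl | ⟨hm, h1, hle⟩)
      · exact ⟨h0, le_refl 0, Nat.zero_le _⟩
      · exact ⟨hm, Nat.zero_le _, hle⟩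
  have hfin : (SS a b ∩ Set.Icc 1 ((a-1)*(b-1)/2)).Finite :=
    Set.Finite.subset (Set.finite_Icc 1 _) Set.inter_subset_right
  have hcnt := count_eq ha hab ((a-1)*(b-1)/2)
  rw [hins, Set.ncard_insert_of_notMem (by simp) hfin] at hcnt
  have hiff : ∀ y ∈ Finset.range a,
      (if b*y ≤ (a-1)*(b-1)/2 then ((a-1)*(b-1)/2 - b*y)/a + 1 else 0)
        = (if y < a/2 then ((a-1)*(b-1)/2 - b*y)/a + 1 else 0) := by
    intro y hy
    simp only [Finset.mem_range] at hy
    simp only [cond_iff ha hb hab hy]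
  rw [Finset.sum_congr rfl hiff, ← Finset.sum_filter] at hcnt
  have hfilter : (Finset.range a).filter (fun y => y < a/2) = Finset.range (a/2) := by
    ext y
    simp only [Finset.mem_filter, Finset.mem_range]
    omega
  rw [hfilter] at hcnt
  omega

end Stmt14Aux

set_option maxHeartbeats 1000000 in
open Stmt14Aux in
theorem stmt_14 (a : ℕ) (ha : 2 ≤ a)
    (p : ℕ) (hp : p = if Odd a then a else 2 * a) :
    ∃ α β : ℕ → ℚ, ∀ b : ℕ, a < b → Nat.Coprime a b →
      (ordNum {m | ∃ x y : ℕ, a * x + b * y = m} : ℚ) =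
        α (b % p) * (b : ℚ) + β (b % p) := by
  refine ⟨fun _ => (∑ y ∈ Finset.range (a/2), (((a:ℚ)-1)/2 - (y:ℚ)))/a,
    fun c => (∑ y ∈ Finset.range (a/2),
      ((-(((a:ℚ)-1)/2) - (((Gfun a c - (c:ℤ)*(y:ℤ)) % (a:ℤ) : ℤ) : ℚ))/a + 1)) - 1, ?_⟩
  intro b hb hab
  have ho := ordNum_eq ha hb hab
  have ha0 : (a:ℚ) ≠ 0 := Nat.cast_ne_zero.2 (by omega)
  show ((ordNum (SS a b) : ℕ) : ℚ)
      = (∑ y ∈ Finset.range (a/2), (((a:ℚ)-1)/2 - (y:ℚ)))/a * (b:ℚ)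
        + ((∑ y ∈ Finset.range (a/2),
            ((-(((a:ℚ)-1)/2) - (((Gfun a (b % p) - ((b % p : ℕ):ℤ)*(y:ℤ)) % (a:ℤ) : ℤ) : ℚ))/a + 1)) - 1)
  rw [ho]
  have hsum1 : 1 ≤ ∑ y ∈ Finset.range (a/2), (((a-1)*(b-1)/2 - b*y)/a + 1) := by
    have hhalf : 1 ≤ a/2 := by omega
    calc 1 ≤ a/2 := hhalf
    _ = ∑ _y ∈ Finset.range (a/2), 1 := by simp
    _ ≤ _ := Finset.sum_le_sum (fun i _ => Nat.le_add_left 1 _)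
  rw [Nat.cast_sub hsum1, Nat.cast_sum]
  have hterm : ∀ y ∈ Finset.range (a/2),
      (((((a-1)*(b-1)/2 - b*y)/a + 1 : ℕ)) : ℚ)
        = ((((a:ℚ)-1)/2 - (y:ℚ))/a) * (b:ℚ)
          + ((-(((a:ℚ)-1)/2) - (((Gfun a (b % p) - ((b % p : ℕ):ℤ)*(y:ℤ)) % (a:ℤ) : ℤ) : ℚ))/a + 1) := by
    intro y hy
    simp only [Finset.mem_range] at hy
    have hby : b*y ≤ (a-1)*(b-1)/2 := (cond_iff ha hb hab (by omega)).2 hy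
    have hmod := key_mod ha hb hab hp y hby
    have hMeq : ((((Gfun a (b % p) - ((b % p : ℕ):ℤ)*(y:ℤ)) % (a:ℤ)) : ℤ) : ℚ)
        = ((((a-1)*(b-1)/2 - b*y) % a : ℕ) : ℚ) := by
      have hz : ((((a-1)*(b-1)/2 - b*y) % a : ℕ) : ℤ)
          = (Gfun a (b % p) - ((b % p : ℕ):ℤ)*(y:ℤ)) % (a:ℤ) := by
        rw [Int.natCast_mod]
        exact hmod
      rw [← hz]
      exact Int.cast_natCast _
    have h2 : (a:ℚ) * ((((a-1)*(b-1)/2 - b*y)/a : ℕ):ℚ)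
        + ((((a-1)*(b-1)/2 - b*y) % a : ℕ):ℚ)
        = (((a-1)*(b-1)/2 : ℕ):ℚ) - (b:ℚ)*(y:ℚ) := by
      have hc2 : (((a-1)*(b-1)/2 - b*y : ℕ):ℚ) = (((a-1)*(b-1)/2 : ℕ):ℚ) - (b:ℚ)*(y:ℚ) := by
        rw [Nat.cast_sub hby]; push_cast; ring
      rw [← hc2]
      exact_mod_cast Nat.div_add_mod ((a-1)*(b-1)/2 - b*y) a
    have h3 : (((a-1)*(b-1)/2 : ℕ):ℚ) = ((a:ℚ)-1)*((b:ℚ)-1)/2 := by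
      have hE := two_dvd_E ha hab
      have h2g : ((a-1)*(b-1)/2) * 2 = (a-1)*(b-1) := Nat.div_mul_cancel hE
      have := congrArg (Nat.cast : ℕ → ℚ) h2g
      push_cast [Nat.cast_sub (show 1 ≤ a by omega), Nat.cast_sub (show 1 ≤ b by omega)] at this
      linarith
    have hQ : ((((a-1)*(b-1)/2 - b*y)/a : ℕ):ℚ)
        = ((((a-1)*(b-1)/2 : ℕ):ℚ) - (b:ℚ)*(y:ℚ) - ((((a-1)*(b-1)/2 - b*y) % a : ℕ):ℚ))/a := by
      rw [eq_div_iff ha0]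
      linarith [h2]
    rw [Nat.cast_add, Nat.cast_one, hMeq, hQ, h3]
    ring
  rw [Finset.sum_congr rfl hterm, Finset.sum_add_distrib, ← Finset.sum_mul, ← Finset.sum_div]
  push_cast
  ring
end
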